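/- arXiv:1612.04996 — 6 statements merged into one kernel-verified Lean document; each statement's English description precedes it below -/
import Mathlib

section
/- For any two Fourier frequencies ω_k, ω_l, the L²([0,1]²,ℂ)-inner product of the periodogram kernels satisfies ⟨p_{ω_k}, p_{ω_l}⟩ = |⟨x̃_{ω_k}, x̃_{ω_l}⟩|², where ⟨·,·⟩ on the right is the L²([0,1],ℂ)-inner product. Consequently the test statistic M̂²_T := 2π ∫₀¹∫₀¹ ( S_{T,2}(τ,σ) − S_{T,1}(τ,σ)·conj(S_{T,1}(τ,σ)) ) dτ dσ satisfies M̂²_T = 2π [ (2/T) ∑_{k=2}^{⌊T/2⌋} |⟨x̃_{ω_k}, x̃_{ω_{k−1}}⟩|² − ‖S_{T,1}‖₂² ]; in particular M̂²_T is a real number. -/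
open MeasureTheory Real
open scoped ComplexConjugate

noncomputable section

lemma aux_memℒp_conj {α : Type*} [MeasurableSpace α] {μ : Measure α} {p : ENNReal}
    {f : α → ℂ} (hf : MemLp f p μ) : MemLp (fun τ => conj (f τ)) p μ := by
  refine ⟨Complex.continuous_conj.comp_aestronglyMeasurable hf.1, ?_⟩
  have h : eLpNorm (conj f) p μ = eLpNorm f p μ := eLpNorm_conj f p μ
  exact h ▸ hf.2

lemma aux_integrable_mul {α : Type*} [MeasurableSpace α] {μ : Measure α}
    {f g : α → ℂ} (hf : MemLp f 2 μ) (hg : MemLp g 2 μ) :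
    Integrable (fun τ => f τ * g τ) μ := by
  have h : MemLp (f • g) 1 μ := MemLp.smul hg hf (hpqr := ⟨by simp [ENNReal.inv_two_add_inv_two]⟩)
  exact memLp_one_iff_integrable.mp h

lemma aux_im (n : ℕ) (s : Finset ℕ) (r : ℕ → ℝ) (a : ℝ) :
    (2 * (π : ℂ) * ((2 / (n : ℂ)) * ∑ k ∈ s, ((r k : ℝ) : ℂ) ^ 2 - (a : ℂ))).im = 0 := by
  have h : (2 * (π : ℂ) * ((2 / (n : ℂ)) * ∑ k ∈ s, ((r k : ℝ) : ℂ) ^ 2 - (a : ℂ)))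
      = ((2 * π * ((2 / (n : ℝ)) * ∑ k ∈ s, (r k) ^ 2 - a) : ℝ) : ℂ) := by
    push_cast
    ring
  rw [h, Complex.ofReal_im]

/-- For data `x₀, …, x_{T-1} ∈ L²([0,1], ℝ)` with functional discrete Fourier transform
`x̃_ω = (2πT)^{-1/2} ∑_{t=0}^{T-1} x_t e^{-iωt}`, periodogram kernel
`p_ω(τ,σ) = x̃_ω(τ) x̃_{-ω}(σ)` and Fourier frequencies `ω_k = 2πk/T`, one has
`⟨p_{ω_k}, p_{ω_l}⟩ = |⟨x̃_{ω_k}, x̃_{ω_l}⟩|²` for any Fourier frequencies, and consequently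
the statistic `M̂²_T = 2π ∫₀¹∫₀¹ (S_{T,2} − S_{T,1} conj S_{T,1})` satisfies
`M̂²_T = 2π [(2/T) ∑_{k=2}^{⌊T/2⌋} |⟨x̃_{ω_k}, x̃_{ω_{k-1}}⟩|² − ‖S_{T,1}‖₂²]`; in particular
`M̂²_T` is real. -/
theorem test_statistic_real_representation
    (T : ℕ) (hT : 1 ≤ T)
    (x : ℕ → ℝ → ℝ)
    (hx : ∀ t < T, MemLp (x t) 2 ((volume : Measure ℝ).restrict (Set.Icc 0 1)))
    (xt : ℝ → ℝ → ℂ)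
    (hxt : ∀ (ω τ : ℝ), xt ω τ = (1 / Real.sqrt (2 * π * T) : ℝ) *
      ∑ t ∈ Finset.range T, (x t τ : ℂ) * Complex.exp (-(Complex.I * ω * t)))
    (p : ℝ → ℝ → ℝ → ℂ)
    (hp : ∀ (ω τ σ : ℝ), p ω τ σ = xt ω τ * xt (-ω) σ)
    (S1 S2 : ℝ → ℝ → ℂ)
    (hS1 : ∀ τ σ : ℝ, S1 τ σ = (1 / (T : ℂ)) *
      ∑ k ∈ Finset.Icc 1 (T / 2), (p (2 * π * k / T) τ σ + conj (p (2 * π * k / T) τ σ)))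
    (hS2 : ∀ τ σ : ℝ, S2 τ σ = (2 / (T : ℂ)) *
      ∑ k ∈ Finset.Icc 2 (T / 2),
        p (2 * π * k / T) τ σ * conj (p (2 * π * ((k : ℝ) - 1) / T) τ σ))
    (Mhat : ℂ)
    (hMhat : Mhat = 2 * π *
      ∫ τ in Set.Icc (0 : ℝ) 1, ∫ σ in Set.Icc (0 : ℝ) 1,
        (S2 τ σ - S1 τ σ * conj (S1 τ σ))) :
    (∀ k l : ℤ,
      (∫ τ in Set.Icc (0 : ℝ) 1, ∫ σ in Set.Icc (0 : ℝ) 1,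
          p (2 * π * k / T) τ σ * conj (p (2 * π * l / T) τ σ))
        = ((‖∫ τ in Set.Icc (0 : ℝ) 1,
            xt (2 * π * k / T) τ * conj (xt (2 * π * l / T) τ)‖ : ℝ) ^ 2 : ℂ))
    ∧ Mhat = 2 * π *
        ((2 / (T : ℂ)) * ∑ k ∈ Finset.Icc 2 (T / 2),
            ((‖∫ τ in Set.Icc (0 : ℝ) 1,
                xt (2 * π * k / T) τ * conj (xt (2 * π * ((k : ℝ) - 1) / T) τ)‖ : ℝ) ^ 2 : ℂ)
          - ((∫ τ in Set.Icc (0 : ℝ) 1, ∫ σ in Set.Icc (0 : ℝ) 1,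
                ‖S1 τ σ‖ ^ 2 : ℝ) : ℂ))
    ∧ Mhat.im = 0 := by
  set μ : Measure ℝ := (volume : Measure ℝ).restrict (Set.Icc 0 1) with hμ
  -- membership in L² of the DFT
  have hxm : ∀ ω : ℝ, MemLp (xt ω) 2 μ := by
    intro ω
    have h : xt ω = fun τ => ((1 / Real.sqrt (2 * π * T) : ℝ) : ℂ) *
        ∑ t ∈ Finset.range T, (x t τ : ℂ) * Complex.exp (-(Complex.I * ω * t)) :=
      funext (hxt ω)
    rw [h]
    refine MemLp.const_mul ?_ _
    refine memLp_finset_sum (Finset.range T) fun t ht => ?_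
    have hmem : MemLp (fun τ => ((x t τ : ℝ) : ℂ)) 2 μ :=
      (hx t (Finset.mem_range.mp ht)).ofReal
    simpa [mul_comm] using hmem.const_mul (Complex.exp (-(Complex.I * ω * t)))
  -- conjugation of the DFT
  have hcx : ∀ (ω τ : ℝ), conj (xt ω τ) = xt (-ω) τ := by
    intro ω τ
    rw [hxt, hxt]
    simp only [map_mul, map_sum, Complex.conj_ofReal]
    congr 1
    refine Finset.sum_congr rfl fun t _ => ?_
    congr 1
    rw [← Complex.exp_conj]
    congr 1
    simp only [map_neg, map_mul, Complex.conj_ofReal, Complex.conj_I, Complex.conj_natCast]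
    push_cast
    ring
  have hpxx : ∀ (ω τ σ : ℝ), p ω τ σ = xt ω τ * conj (xt ω σ) := by
    intro ω τ σ; rw [hp, hcx]
  have hpc : ∀ (ω τ σ : ℝ), conj (p ω τ σ) = conj (xt ω τ) * xt ω σ := by
    intro ω τ σ; rw [hpxx]; simp
  -- integrability of products
  have i1 : ∀ ω ω' : ℝ, Integrable (fun τ => xt ω τ * conj (xt ω' τ)) μ :=
    fun ω ω' => aux_integrable_mul (hxm ω) (aux_memℒp_conj (hxm ω'))
  have i2 : ∀ ω ω' : ℝ, Integrable (fun τ => conj (xt ω τ) * xt ω' τ) μ :=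
    fun ω ω' => aux_integrable_mul (aux_memℒp_conj (hxm ω)) (hxm ω')
  have i3 : ∀ ω ω' : ℝ, Integrable (fun τ => xt ω τ * xt ω' τ) μ :=
    fun ω ω' => aux_integrable_mul (hxm ω) (hxm ω')
  have i4 : ∀ ω ω' : ℝ, Integrable (fun τ => conj (xt ω τ) * conj (xt ω' τ)) μ :=
    fun ω ω' => aux_integrable_mul (aux_memℒp_conj (hxm ω)) (aux_memℒp_conj (hxm ω'))
  have jadd : ∀ (f g : ℝ → ℂ), Integrable f μ → Integrable g μ →
      Integrable (fun σ => f σ + g σ) μ := fun f g hf hg => hf.add hg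
  have iadd : ∀ (f g : ℝ → ℂ), Integrable f μ → Integrable g μ →
      (∫ σ, (f σ + g σ) ∂μ) = (∫ σ, f σ ∂μ) + ∫ σ, g σ ∂μ := fun f g hf hg => integral_add hf hg
  have hic : ∀ ω ω' : ℝ, (∫ σ, conj (xt ω σ) * xt ω' σ ∂μ)
      = conj (∫ σ, xt ω σ * conj (xt ω' σ) ∂μ) := by
    intro ω ω'; rw [← integral_conj]; simp
  -- the key identity for the first assertion
  have key : ∀ ω ω' : ℝ,
      (∫ τ, ∫ σ, p ω τ σ * conj (p ω' τ σ) ∂μ ∂μ)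
        = ((‖∫ τ, xt ω τ * conj (xt ω' τ) ∂μ‖ : ℝ) ^ 2 : ℂ) := by
    intro ω ω'
    have h1 : ∀ τ, (∫ σ, p ω τ σ * conj (p ω' τ σ) ∂μ)
        = (xt ω τ * conj (xt ω' τ)) * conj (∫ σ, xt ω σ * conj (xt ω' σ) ∂μ) := by
      intro τ
      rw [← hic, ← integral_const_mul]
      congr 1; funext σ; rw [hpxx, hpc]; ring
    simp only [h1]
    rw [integral_mul_const, Complex.mul_conj, Complex.normSq_eq_norm_sq]
    push_cast
    ring
  -- S2 rewritten
  have hS2e : ∀ τ σ : ℝ, S2 τ σ = (2 / (T : ℂ)) * ∑ k ∈ Finset.Icc 2 (T / 2),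
      (xt (2 * π * k / T) τ * conj (xt (2 * π * ((k : ℝ) - 1) / T) τ)) *
        (conj (xt (2 * π * k / T) σ) * xt (2 * π * ((k : ℝ) - 1) / T) σ) := by
    intro τ σ; rw [hS2]; congr 1
    refine Finset.sum_congr rfl fun k _ => ?_
    rw [hpxx, hpc]; ring
  have hS2σ : ∀ τ : ℝ, (∫ σ, S2 τ σ ∂μ) = (2 / (T : ℂ)) * ∑ k ∈ Finset.Icc 2 (T / 2),
      (xt (2 * π * k / T) τ * conj (xt (2 * π * ((k : ℝ) - 1) / T) τ)) *
        conj (∫ σ, xt (2 * π * k / T) σ * conj (xt (2 * π * ((k : ℝ) - 1) / T) σ) ∂μ) := by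
    intro τ
    simp only [hS2e]
    rw [integral_const_mul, integral_finset_sum _ (fun k _ => (i2 _ _).const_mul _)]
    congr 1
    refine Finset.sum_congr rfl fun k _ => ?_
    rw [integral_const_mul, hic]
  have hS2int : Integrable (fun τ => ∫ σ, S2 τ σ ∂μ) μ := by
    rw [show (fun τ => ∫ σ, S2 τ σ ∂μ) = fun τ => (2 / (T : ℂ)) * ∑ k ∈ Finset.Icc 2 (T / 2),
      (xt (2 * π * k / T) τ * conj (xt (2 * π * ((k : ℝ) - 1) / T) τ)) *
        conj (∫ σ, xt (2 * π * k / T) σ * conj (xt (2 * π * ((k : ℝ) - 1) / T) σ) ∂μ)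
      from funext hS2σ]
    exact (integrable_finset_sum _ (fun k _ => (i1 _ _).mul_const _)).const_mul _
  have hS2τ : (∫ τ, ∫ σ, S2 τ σ ∂μ ∂μ) = (2 / (T : ℂ)) * ∑ k ∈ Finset.Icc 2 (T / 2),
      ((‖∫ τ, xt (2 * π * k / T) τ *
        conj (xt (2 * π * ((k : ℝ) - 1) / T) τ) ∂μ‖ : ℝ) ^ 2 : ℂ) := by
    simp only [hS2σ]
    rw [integral_const_mul, integral_finset_sum _ (fun k _ => (i1 _ _).mul_const _)]
    congr 1
    refine Finset.sum_congr rfl fun k _ => ?_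
    rw [integral_mul_const, Complex.mul_conj, Complex.normSq_eq_norm_sq]
    push_cast; ring
  -- S1 rewritten
  have hS1e : ∀ τ σ : ℝ, S1 τ σ = (1 / (T : ℂ)) * ∑ k ∈ Finset.Icc 1 (T / 2),
      (xt (2 * π * k / T) τ * conj (xt (2 * π * k / T) σ)
        + conj (xt (2 * π * k / T) τ) * xt (2 * π * k / T) σ) := by
    intro τ σ; rw [hS1]; congr 1
    refine Finset.sum_congr rfl fun k _ => ?_
    rw [hpc, hpxx]
  have hS1mem : ∀ τ : ℝ, MemLp (fun σ => S1 τ σ) 2 μ := by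
    intro τ
    rw [show (fun σ => S1 τ σ) = fun σ => (1 / (T : ℂ)) * ∑ k ∈ Finset.Icc 1 (T / 2),
      (xt (2 * π * k / T) τ * conj (xt (2 * π * k / T) σ)
        + conj (xt (2 * π * k / T) τ) * xt (2 * π * k / T) σ) from funext (hS1e τ)]
    refine MemLp.const_mul ?_ _
    refine memLp_finset_sum _ fun k _ => ?_
    exact ((aux_memℒp_conj (hxm _)).const_mul _).add ((hxm _).const_mul _)
  have hS1ccint : ∀ τ : ℝ, Integrable (fun σ => S1 τ σ * conj (S1 τ σ)) μ :=
    fun τ => aux_integrable_mul (hS1mem τ) (aux_memℒp_conj (hS1mem τ))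
  have hS2intσ : ∀ τ : ℝ, Integrable (fun σ => S2 τ σ) μ := by
    intro τ
    rw [show (fun σ => S2 τ σ) = fun σ => (2 / (T : ℂ)) * ∑ k ∈ Finset.Icc 2 (T / 2),
      (xt (2 * π * k / T) τ * conj (xt (2 * π * ((k : ℝ) - 1) / T) τ)) *
        (conj (xt (2 * π * k / T) σ) * xt (2 * π * ((k : ℝ) - 1) / T) σ) from funext (hS2e τ)]
    exact (integrable_finset_sum _ fun k _ => (i2 _ _).const_mul _).const_mul _
  -- expansion of S1 * conj S1
  have hS1cc : ∀ τ σ : ℝ, S1 τ σ * conj (S1 τ σ) = (1 / (T : ℂ)) * (1 / (T : ℂ)) *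
      ∑ k ∈ Finset.Icc 1 (T / 2), ∑ l ∈ Finset.Icc 1 (T / 2),
        ((xt (2 * π * k / T) τ * conj (xt (2 * π * l / T) τ)) *
            (conj (xt (2 * π * k / T) σ) * xt (2 * π * l / T) σ)
        + (xt (2 * π * k / T) τ * xt (2 * π * l / T) τ) *
            (conj (xt (2 * π * k / T) σ) * conj (xt (2 * π * l / T) σ))
        + (conj (xt (2 * π * k / T) τ) * conj (xt (2 * π * l / T) τ)) *
            (xt (2 * π * k / T) σ * xt (2 * π * l / T) σ)
        + (conj (xt (2 * π * k / T) τ) * xt (2 * π * l / T) τ) *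
            (xt (2 * π * k / T) σ * conj (xt (2 * π * l / T) σ))) := by
    intro τ σ
    rw [hS1e]
    simp only [map_mul, map_sum, map_add, Complex.conj_conj, map_div₀, map_one,
      Complex.conj_natCast]
    rw [mul_mul_mul_comm, Finset.sum_mul_sum]
    congr 1
    refine Finset.sum_congr rfl fun k _ => ?_
    refine Finset.sum_congr rfl fun l _ => ?_
    ring
  have hGval : ∀ τ : ℝ, (∫ σ, S1 τ σ * conj (S1 τ σ) ∂μ) = (1 / (T : ℂ)) * (1 / (T : ℂ)) *
      ∑ k ∈ Finset.Icc 1 (T / 2), ∑ l ∈ Finset.Icc 1 (T / 2),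
        ((xt (2 * π * k / T) τ * conj (xt (2 * π * l / T) τ)) *
            (∫ σ, conj (xt (2 * π * k / T) σ) * xt (2 * π * l / T) σ ∂μ)
        + (xt (2 * π * k / T) τ * xt (2 * π * l / T) τ) *
            (∫ σ, conj (xt (2 * π * k / T) σ) * conj (xt (2 * π * l / T) σ) ∂μ)
        + (conj (xt (2 * π * k / T) τ) * conj (xt (2 * π * l / T) τ)) *
            (∫ σ, xt (2 * π * k / T) σ * xt (2 * π * l / T) σ ∂μ)
        + (conj (xt (2 * π * k / T) τ) * xt (2 * π * l / T) τ) *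
            (∫ σ, xt (2 * π * k / T) σ * conj (xt (2 * π * l / T) σ) ∂μ)) := by
    intro τ
    simp only [hS1cc]
    rw [integral_const_mul, integral_finset_sum _ (fun k _ => integrable_finset_sum _
      (fun l _ => jadd _ _ (jadd _ _ (jadd _ _ ((i2 _ _).const_mul _) ((i4 _ _).const_mul _))
        ((i3 _ _).const_mul _)) ((i1 _ _).const_mul _)))]
    congr 1
    refine Finset.sum_congr rfl fun k _ => ?_
    rw [integral_finset_sum _ (fun l _ => jadd _ _ (jadd _ _ (jadd _ _ ((i2 _ _).const_mul _)
      ((i4 _ _).const_mul _)) ((i3 _ _).const_mul _)) ((i1 _ _).const_mul _))]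
    refine Finset.sum_congr rfl fun l _ => ?_
    rw [iadd _ _ (jadd _ _ (jadd _ _ ((i2 _ _).const_mul _) ((i4 _ _).const_mul _))
        ((i3 _ _).const_mul _)) ((i1 _ _).const_mul _),
      iadd _ _ (jadd _ _ ((i2 _ _).const_mul _) ((i4 _ _).const_mul _)) ((i3 _ _).const_mul _),
      iadd _ _ ((i2 _ _).const_mul _) ((i4 _ _).const_mul _),
      integral_const_mul, integral_const_mul, integral_const_mul, integral_const_mul]
  have hGint : Integrable (fun τ => ∫ σ, S1 τ σ * conj (S1 τ σ) ∂μ) μ := by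
    rw [show (fun τ => ∫ σ, S1 τ σ * conj (S1 τ σ) ∂μ) = fun τ => (1 / (T : ℂ)) * (1 / (T : ℂ)) *
      ∑ k ∈ Finset.Icc 1 (T / 2), ∑ l ∈ Finset.Icc 1 (T / 2),
        ((xt (2 * π * k / T) τ * conj (xt (2 * π * l / T) τ)) *
            (∫ σ, conj (xt (2 * π * k / T) σ) * xt (2 * π * l / T) σ ∂μ)
        + (xt (2 * π * k / T) τ * xt (2 * π * l / T) τ) *
            (∫ σ, conj (xt (2 * π * k / T) σ) * conj (xt (2 * π * l / T) σ) ∂μ)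
        + (conj (xt (2 * π * k / T) τ) * conj (xt (2 * π * l / T) τ)) *
            (∫ σ, xt (2 * π * k / T) σ * xt (2 * π * l / T) σ ∂μ)
        + (conj (xt (2 * π * k / T) τ) * xt (2 * π * l / T) τ) *
            (∫ σ, xt (2 * π * k / T) σ * conj (xt (2 * π * l / T) σ) ∂μ)) from funext hGval]
    exact (integrable_finset_sum _ fun k _ => integrable_finset_sum _ fun l _ =>
      ((((i1 _ _).mul_const _).add ((i3 _ _).mul_const _)).add
        ((i4 _ _).mul_const _)).add ((i2 _ _).mul_const _)).const_mul _
  have hS1σreal : ∀ τ : ℝ, (∫ σ, S1 τ σ * conj (S1 τ σ) ∂μ)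
      = ((∫ σ, ‖S1 τ σ‖ ^ 2 ∂μ : ℝ) : ℂ) := by
    intro τ
    calc (∫ σ, S1 τ σ * conj (S1 τ σ) ∂μ)
        = ∫ σ, ((Complex.normSq (S1 τ σ) : ℝ) : ℂ) ∂μ := by simp only [Complex.mul_conj]
      _ = ((∫ σ, Complex.normSq (S1 τ σ) ∂μ : ℝ) : ℂ) := integral_ofReal
      _ = ((∫ σ, ‖S1 τ σ‖ ^ 2 ∂μ : ℝ) : ℂ) := by
          norm_cast
          simp only [Complex.sq_norm]
  have hsplit : (∫ τ, ∫ σ, (S2 τ σ - S1 τ σ * conj (S1 τ σ)) ∂μ ∂μ)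
      = (∫ τ, ∫ σ, S2 τ σ ∂μ ∂μ) - ∫ τ, ∫ σ, S1 τ σ * conj (S1 τ σ) ∂μ ∂μ := by
    have h1 : ∀ τ : ℝ, (∫ σ, (S2 τ σ - S1 τ σ * conj (S1 τ σ)) ∂μ)
        = (∫ σ, S2 τ σ ∂μ) - ∫ σ, S1 τ σ * conj (S1 τ σ) ∂μ :=
      fun τ => integral_sub (hS2intσ τ) (hS1ccint τ)
    simp only [h1]
    exact integral_sub hS2int hGint
  have hGfinal : (∫ τ, ∫ σ, S1 τ σ * conj (S1 τ σ) ∂μ ∂μ)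
      = ((∫ τ, ∫ σ, ‖S1 τ σ‖ ^ 2 ∂μ ∂μ : ℝ) : ℂ) := by
    simp only [hS1σreal]
    exact integral_ofReal
  have heq : Mhat = 2 * π *
        ((2 / (T : ℂ)) * ∑ k ∈ Finset.Icc 2 (T / 2),
            ((‖∫ τ, xt (2 * π * k / T) τ *
                conj (xt (2 * π * ((k : ℝ) - 1) / T) τ) ∂μ‖ : ℝ) ^ 2 : ℂ)
          - ((∫ τ, ∫ σ, ‖S1 τ σ‖ ^ 2 ∂μ ∂μ : ℝ) : ℂ)) := by
    rw [hMhat, hsplit, hS2τ, hGfinal]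
  refine ⟨fun k l => key _ _, heq, ?_⟩
  rw [heq]
  exact aux_im T (Finset.Icc 2 (T / 2))
    (fun k => ‖∫ τ, xt (2 * π * k / T) τ *
      conj (xt (2 * π * ((k : ℝ) - 1) / T) τ) ∂μ‖)
    (∫ τ, ∫ σ, ‖S1 τ σ‖ ^ 2 ∂μ ∂μ)
end
end

section
/- For every T ≥ 1 and all frequencies ω, λ ∈ ℝ, the periodograms satisfy E|p_ω · p_λ| ≤ 7Q / ((2π)² T), where Q := ∑_{t₁,t₂,t₃∈ℤ} |E[Y_{t₁} Z_{t₂} Y_{t₃} Z_0]| is assumed finite. -/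
open MeasureTheory Real
open scoped ComplexConjugate

noncomputable section

private lemma quad_expand {M : Type*} [CommRing M] {ι : Type*} (r : Finset ι)
    (f1 f2 f3 f4 : ι → M) :
    ((∑ t ∈ r, f1 t) * ∑ t ∈ r, f2 t) * ((∑ t ∈ r, f3 t) * ∑ t ∈ r, f4 t)
      = ∑ t1 ∈ r, ∑ t2 ∈ r, ∑ t3 ∈ r, ∑ t4 ∈ r, f1 t1 * f2 t2 * f3 t3 * f4 t4 := by
  rw [Finset.sum_mul_sum r r f1 f2, Finset.sum_mul_sum r r f3 f4, Finset.sum_mul_sum r r]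
  refine Finset.sum_congr rfl fun t1 _ => ?_
  simp only [Finset.sum_mul_sum]
  rw [Finset.sum_comm]
  exact Finset.sum_congr rfl fun t2 _ => Finset.sum_congr rfl fun t3 _ =>
    Finset.sum_congr rfl fun t4 _ => by ring

private lemma sum4_comm {M : Type*} [AddCommMonoid M] {ι : Type*} (r : Finset ι)
    (X : ι → ι → ι → ι → M) :
    ∑ t1 ∈ r, ∑ t2 ∈ r, ∑ t3 ∈ r, ∑ t4 ∈ r, X t1 t2 t3 t4
      = ∑ t4 ∈ r, ∑ t1 ∈ r, ∑ t2 ∈ r, ∑ t3 ∈ r, X t1 t2 t3 t4 :=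
  calc ∑ t1 ∈ r, ∑ t2 ∈ r, ∑ t3 ∈ r, ∑ t4 ∈ r, X t1 t2 t3 t4
      = ∑ t1 ∈ r, ∑ t2 ∈ r, ∑ t4 ∈ r, ∑ t3 ∈ r, X t1 t2 t3 t4 :=
        Finset.sum_congr rfl fun t1 _ => Finset.sum_congr rfl fun t2 _ =>
          Finset.sum_comm
    _ = ∑ t1 ∈ r, ∑ t4 ∈ r, ∑ t2 ∈ r, ∑ t3 ∈ r, X t1 t2 t3 t4 :=
        Finset.sum_congr rfl fun t1 _ => Finset.sum_comm
    _ = ∑ t4 ∈ r, ∑ t1 ∈ r, ∑ t2 ∈ r, ∑ t3 ∈ r, X t1 t2 t3 t4 := Finset.sum_comm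

private def wgt (θ : ℝ) (t1 t2 t3 t4 : ℕ) : ℂ :=
  Complex.exp (-(Complex.I * (θ : ℂ) * (t1 : ℂ))) *
    Complex.exp (-(Complex.I * ((-θ : ℝ) : ℂ) * (t2 : ℂ))) *
    (starRingEnd ℂ) (Complex.exp (-(Complex.I * (θ : ℂ) * (t3 : ℂ)))) *
    (starRingEnd ℂ) (Complex.exp (-(Complex.I * ((-θ : ℝ) : ℂ) * (t4 : ℂ))))

private lemma wgt_abs (θ : ℝ) (t1 t2 t3 t4 : ℕ) : ‖wgt θ t1 t2 t3 t4‖ = 1 := by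
  have h : ∀ (a : ℝ) (n : ℕ), ‖Complex.exp (-(Complex.I * (a : ℂ) * (n : ℂ)))‖ = 1 := by
    intro a n
    rw [Complex.norm_exp]
    simp [Complex.mul_re]
  have h' : ∀ (a : ℝ) (n : ℕ), ‖Complex.exp (Complex.I * (a : ℂ) * (n : ℂ))‖ = 1 := by
    intro a n
    rw [Complex.norm_exp]
    simp [Complex.mul_re]
  simp [wgt, norm_mul, Complex.norm_conj, h, h']

/-- Let `(Y t)` and `(Z t)` be real random variables with finite fourth moments and jointly
fourth-order stationary mixed moments.  With the discrete Fourier transforms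
`Ỹ_ω = (2πT)^{-1/2} ∑_{t=0}^{T-1} Y_t e^{-iωt}`, `Z̃_ω = (2πT)^{-1/2} ∑_{t=0}^{T-1} Z_t e^{-iωt}`
and the periodogram `p_ω = Ỹ_ω Z̃_{-ω}`, for every `T ≥ 1` and all frequencies `ω, λ ∈ ℝ`,
`E|p_ω p_λ| ≤ 7 Q / ((2π)² T)`, where `Q = ∑'_{t₁,t₂,t₃ ∈ ℤ} |E[Y_{t₁} Z_{t₂} Y_{t₃} Z_0]|`
is assumed finite. -/
theorem periodogram_product_bound
    {Ω : Type*} [MeasureSpace Ω] [IsProbabilityMeasure (volume : Measure Ω)]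
    (Y Z : ℤ → Ω → ℝ)
    (hYmeas : ∀ t : ℤ, Measurable (Y t)) (hZmeas : ∀ t : ℤ, Measurable (Z t))
    (hY4 : ∀ t : ℤ, MemLp (Y t) 4) (hZ4 : ∀ t : ℤ, MemLp (Z t) 4)
    (hstat : ∀ u₁ u₂ u₃ u₄ : ℤ,
      (∫ x, Y u₁ x * Z u₂ x * Y u₃ x * Z u₄ x)
        = ∫ x, Y (u₁ - u₄) x * Z (u₂ - u₄) x * Y (u₃ - u₄) x * Z 0 x)
    (T : ℕ) (hT : 1 ≤ T)
    (Yt Zt : ℝ → Ω → ℂ)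
    (hYt : ∀ (ω : ℝ) (x : Ω), Yt ω x = (1 / Real.sqrt (2 * π * T) : ℝ) *
      ∑ t ∈ Finset.range T, ((Y t x : ℂ) * Complex.exp (-(Complex.I * ω * t))))
    (hZt : ∀ (ω : ℝ) (x : Ω), Zt ω x = (1 / Real.sqrt (2 * π * T) : ℝ) *
      ∑ t ∈ Finset.range T, ((Z t x : ℂ) * Complex.exp (-(Complex.I * ω * t))))
    (p : ℝ → Ω → ℂ)
    (hp : ∀ (ω : ℝ) (x : Ω), p ω x = Yt ω x * Zt (-ω) x)
    (Q : ℝ)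
    (hQsum : Summable fun t : ℤ × ℤ × ℤ =>
      |∫ x, Y t.1 x * Z t.2.1 x * Y t.2.2 x * Z 0 x|)
    (hQ : Q = ∑' t : ℤ × ℤ × ℤ, |∫ x, Y t.1 x * Z t.2.1 x * Y t.2.2 x * Z 0 x|) :
    ∀ ω lam : ℝ,
      (∫ x, ‖p ω x * p lam x‖) ≤ 7 * Q / ((2 * π) ^ 2 * T) := by
  intro ω lam
  have hTpos : (0 : ℝ) < T := by
    have : (0 : ℕ) < T := hT
    exact_mod_cast this
  have h2πT : (0 : ℝ) < 2 * π * T := by positivity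
  set c : ℝ := 1 / Real.sqrt (2 * π * T) with hcdef
  have hcnn : 0 ≤ c := by positivity
  have hc2 : c ^ 2 = 1 / (2 * π * T) := by
    rw [hcdef, div_pow, one_pow, sq_sqrt h2πT.le]
  have hQnn : 0 ≤ Q := hQ ▸ tsum_nonneg fun _ => abs_nonneg _
  -- integrability of quadruple products
  have hmul2 : ∀ a b : ℤ, MemLp (fun x => Y a x * Z b x) 2 (volume : Measure Ω) := by
    intro a b
    exact MemLp.smul (hZ4 b) (hY4 a) (p := 4) (q := 4) (r := 2)
      (hpqr := ⟨by
        have : (4:ENNReal) = 2 * 2 := by norm_num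
        rw [this, ENNReal.mul_inv (by simp) (by simp), ← add_mul, ENNReal.inv_two_add_inv_two,
          one_mul]⟩)
  have hint4 : ∀ a b u d : ℤ, Integrable (fun x => Y a x * Z b x * Y u x * Z d x) := by
    intro a b u d
    have h : MemLp (fun x => (Y a x * Z b x) * (Y u x * Z d x)) 1 (volume : Measure Ω) :=
      MemLp.smul (hmul2 u d) (hmul2 a b) (p := 2) (q := 2) (r := 1)
        (hpqr := ⟨by rw [ENNReal.inv_two_add_inv_two, inv_one]⟩)
    have h' := memLp_one_iff_integrable.mp h
    have he : (fun x => (Y a x * Z b x) * (Y u x * Z d x))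
        = fun x => Y a x * Z b x * Y u x * Z d x := by
      funext x; ring
    rwa [he] at h'
  have htermInt : ∀ (a b u d : ℤ) (k : ℝ) (w : ℂ),
      Integrable (fun x => ((k * (Y a x * Z b x * Y u x * Z d x) : ℝ) : ℂ) * w) := by
    intro a b u d k w
    exact (((hint4 a b u d).const_mul k).ofReal).mul_const w
  -- pointwise expansion of |p θ|² as a quadruple sum
  have hpt : ∀ (θ : ℝ) (x : Ω), p θ x * conj (p θ x)
      = ∑ t1 ∈ Finset.range T, ∑ t2 ∈ Finset.range T, ∑ t3 ∈ Finset.range T,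
          ∑ t4 ∈ Finset.range T,
            ((c ^ 4 * (Y t1 x * Z t2 x * Y t3 x * Z t4 x) : ℝ) : ℂ) * wgt θ t1 t2 t3 t4 := by
    intro θ x
    have h1 : p θ x * conj (p θ x)
        = ((c : ℂ) * (c : ℂ) * ((c : ℂ) * (c : ℂ))) *
          (((∑ t ∈ Finset.range T, ((Y t x : ℂ) * Complex.exp (-(Complex.I * (θ : ℂ) * t)))) *
            ∑ t ∈ Finset.range T, ((Z t x : ℂ) * Complex.exp (-(Complex.I * ((-θ : ℝ) : ℂ) * t)))) *
           ((∑ t ∈ Finset.range T,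
              ((Y t x : ℂ) * (starRingEnd ℂ) (Complex.exp (-(Complex.I * (θ : ℂ) * t))))) *
            ∑ t ∈ Finset.range T,
              ((Z t x : ℂ) * (starRingEnd ℂ) (Complex.exp (-(Complex.I * ((-θ : ℝ) : ℂ) * t)))))) := by
      simp only [hp, hYt, hZt, map_mul, map_sum, Complex.conj_ofReal]
      ring
    rw [h1, quad_expand]
    simp only [Finset.mul_sum]
    refine Finset.sum_congr rfl fun t1 _ => Finset.sum_congr rfl fun t2 _ =>
      Finset.sum_congr rfl fun t3 _ => Finset.sum_congr rfl fun t4 _ => ?_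
    simp only [wgt]
    push_cast
    ring
  -- the integral of the expansion
  have hI : ∀ θ : ℝ, (∫ x, p θ x * conj (p θ x))
      = ∑ t1 ∈ Finset.range T, ∑ t2 ∈ Finset.range T, ∑ t3 ∈ Finset.range T,
          ∑ t4 ∈ Finset.range T,
            ((c ^ 4 * (∫ x, Y t1 x * Z t2 x * Y t3 x * Z t4 x) : ℝ) : ℂ) * wgt θ t1 t2 t3 t4 := by
    intro θ
    simp only [hpt θ]
    rw [integral_finset_sum _ fun t1 _ => integrable_finset_sum _ fun t2 _ =>
      integrable_finset_sum _ fun t3 _ => integrable_finset_sum _ fun t4 _ =>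
        htermInt _ _ _ _ _ _]
    refine Finset.sum_congr rfl fun t1 _ => ?_
    rw [integral_finset_sum _ fun t2 _ => integrable_finset_sum _ fun t3 _ =>
      integrable_finset_sum _ fun t4 _ => htermInt _ _ _ _ _ _]
    refine Finset.sum_congr rfl fun t2 _ => ?_
    rw [integral_finset_sum _ fun t3 _ => integrable_finset_sum _ fun t4 _ =>
      htermInt _ _ _ _ _ _]
    refine Finset.sum_congr rfl fun t3 _ => ?_
    rw [integral_finset_sum _ fun t4 _ => htermInt _ _ _ _ _ _]
    refine Finset.sum_congr rfl fun t4 _ => ?_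
    rw [integral_mul_const]
    congr 1
    rw [← integral_const_mul]
    exact integral_ofReal
  -- counting bound
  have general : ∀ (s : Finset (ℕ × ℕ × ℕ)) (t4 : ℕ),
      (∑ q ∈ s, |∫ x, Y ((q.1 : ℤ) - t4) x * Z ((q.2.1 : ℤ) - t4) x *
          Y ((q.2.2 : ℤ) - t4) x * Z 0 x|) ≤ Q := by
    intro s t4
    have hinj : ∀ a ∈ s, ∀ b ∈ s,
        (((a.1 : ℤ) - t4, (a.2.1 : ℤ) - t4, (a.2.2 : ℤ) - t4) : ℤ × ℤ × ℤ)
          = (((b.1 : ℤ) - t4, (b.2.1 : ℤ) - t4, (b.2.2 : ℤ) - t4) : ℤ × ℤ × ℤ) → a = b := by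
      rintro ⟨a1, a2, a3⟩ - ⟨b1, b2, b3⟩ - h
      simp only [Prod.mk.injEq] at h ⊢
      omega
    calc (∑ q ∈ s, |∫ x, Y ((q.1 : ℤ) - t4) x * Z ((q.2.1 : ℤ) - t4) x *
            Y ((q.2.2 : ℤ) - t4) x * Z 0 x|)
        = ∑ u ∈ s.image (fun q : ℕ × ℕ × ℕ =>
              (((q.1 : ℤ) - t4, (q.2.1 : ℤ) - t4, (q.2.2 : ℤ) - t4) : ℤ × ℤ × ℤ)),
            |∫ x, Y u.1 x * Z u.2.1 x * Y u.2.2 x * Z 0 x| :=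
          (Finset.sum_image (f := fun u : ℤ × ℤ × ℤ =>
            |∫ x, Y u.1 x * Z u.2.1 x * Y u.2.2 x * Z 0 x|) hinj).symm
      _ ≤ ∑' u : ℤ × ℤ × ℤ, |∫ x, Y u.1 x * Z u.2.1 x * Y u.2.2 x * Z 0 x| :=
          Summable.sum_le_tsum _ (fun _ _ => abs_nonneg _) hQsum
      _ = Q := hQ.symm
  have conv : ∀ t4 : ℕ,
      (∑ t1 ∈ Finset.range T, ∑ t2 ∈ Finset.range T, ∑ t3 ∈ Finset.range T,
          |∫ x, Y ((t1 : ℤ) - t4) x * Z ((t2 : ℤ) - t4) x * Y ((t3 : ℤ) - t4) x * Z 0 x|)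
        = ∑ q ∈ Finset.range T ×ˢ Finset.range T ×ˢ Finset.range T,
            |∫ x, Y ((q.1 : ℤ) - t4) x * Z ((q.2.1 : ℤ) - t4) x *
              Y ((q.2.2 : ℤ) - t4) x * Z 0 x| := by
    intro t4
    rw [Finset.sum_product]
    exact Finset.sum_congr rfl fun t1 _ => by rw [Finset.sum_product]
  -- the key single-frequency bound
  have key : ∀ θ : ℝ, (∫ x, ‖p θ x‖ ^ 2) ≤ Q / ((2 * π) ^ 2 * T) := by
    intro θ
    have hterm : ∀ t1 t2 t3 t4 : ℕ,
        ‖((c ^ 4 * (∫ x, Y t1 x * Z t2 x * Y t3 x * Z t4 x) : ℝ) : ℂ) *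
            wgt θ t1 t2 t3 t4‖
          = c ^ 4 * |∫ x, Y ((t1 : ℤ) - t4) x * Z ((t2 : ℤ) - t4) x *
              Y ((t3 : ℤ) - t4) x * Z 0 x| := by
      intro t1 t2 t3 t4
      rw [norm_mul, wgt_abs, mul_one, Complex.norm_real, Real.norm_eq_abs, hstat, abs_mul,
        abs_of_nonneg (pow_nonneg hcnn 4)]
    have habs : ‖∫ x, p θ x * conj (p θ x)‖ ≤ c ^ 4 * (T * Q) := by
      rw [hI θ]
      refine le_trans (norm_sum_le _ _) ?_
      refine le_trans (Finset.sum_le_sum fun t1 _ => norm_sum_le _ _) ?_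
      refine le_trans (Finset.sum_le_sum fun t1 _ => Finset.sum_le_sum fun t2 _ =>
        norm_sum_le _ _) ?_
      refine le_trans (Finset.sum_le_sum fun t1 _ => Finset.sum_le_sum fun t2 _ =>
        Finset.sum_le_sum fun t3 _ => norm_sum_le _ _) ?_
      simp only [hterm]
      rw [sum4_comm (Finset.range T) (fun t1 t2 t3 t4 =>
        c ^ 4 * |∫ x, Y ((t1 : ℤ) - t4) x * Z ((t2 : ℤ) - t4) x *
          Y ((t3 : ℤ) - t4) x * Z 0 x|)]
      calc (∑ t4 ∈ Finset.range T, ∑ t1 ∈ Finset.range T, ∑ t2 ∈ Finset.range T,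
              ∑ t3 ∈ Finset.range T,
                c ^ 4 * |∫ x, Y ((t1 : ℤ) - t4) x * Z ((t2 : ℤ) - t4) x *
                  Y ((t3 : ℤ) - t4) x * Z 0 x|)
          ≤ ∑ t4 ∈ Finset.range T, c ^ 4 * Q := by
            refine Finset.sum_le_sum fun t4 _ => ?_
            have h1 : (∑ t1 ∈ Finset.range T, ∑ t2 ∈ Finset.range T, ∑ t3 ∈ Finset.range T,
                c ^ 4 * |∫ x, Y ((t1 : ℤ) - t4) x * Z ((t2 : ℤ) - t4) x *
                  Y ((t3 : ℤ) - t4) x * Z 0 x|)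
                = c ^ 4 * ∑ t1 ∈ Finset.range T, ∑ t2 ∈ Finset.range T, ∑ t3 ∈ Finset.range T,
                    |∫ x, Y ((t1 : ℤ) - t4) x * Z ((t2 : ℤ) - t4) x *
                      Y ((t3 : ℤ) - t4) x * Z 0 x| := by
              simp only [Finset.mul_sum]
            rw [h1, conv t4]
            exact mul_le_mul_of_nonneg_left (general _ t4) (pow_nonneg hcnn 4)
        _ = c ^ 4 * (T * Q) := by
            rw [Finset.sum_const, Finset.card_range, nsmul_eq_mul]; ring
    have h3 : (∫ x, ‖p θ x‖ ^ 2) = ‖∫ x, p θ x * conj (p θ x)‖ := by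
      have hpc : ∀ x : Ω, p θ x * conj (p θ x) = ((‖p θ x‖ ^ 2 : ℝ) : ℂ) := by
        intro x
        rw [Complex.mul_conj, Complex.sq_norm]
      have h4 : (∫ x, p θ x * conj (p θ x)) = ((∫ x, ‖p θ x‖ ^ 2 : ℝ) : ℂ) := by
        simp only [hpc]
        exact integral_ofReal
      rw [h4, Complex.norm_real, Real.norm_eq_abs, abs_of_nonneg (integral_nonneg fun x => sq_nonneg _)]
    rw [h3]
    refine habs.trans (le_of_eq ?_)
    have hc4 : c ^ 4 = (c ^ 2) ^ 2 := by ring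
    rw [hc4, hc2]
    have hπ : π ≠ 0 := pi_ne_zero
    have hTne : (T : ℝ) ≠ 0 := ne_of_gt hTpos
    field_simp
  -- integrability of |p θ|²
  have hintsq : ∀ θ : ℝ, Integrable (fun x => ‖p θ x‖ ^ 2) := by
    intro θ
    have h1 : Integrable (fun x => p θ x * conj (p θ x)) := by
      have he : (fun x => p θ x * conj (p θ x))
          = fun x => ∑ t1 ∈ Finset.range T, ∑ t2 ∈ Finset.range T, ∑ t3 ∈ Finset.range T,
              ∑ t4 ∈ Finset.range T,
                ((c ^ 4 * (Y t1 x * Z t2 x * Y t3 x * Z t4 x) : ℝ) : ℂ) * wgt θ t1 t2 t3 t4 :=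
        funext (hpt θ)
      rw [he]
      exact integrable_finset_sum _ fun t1 _ => integrable_finset_sum _ fun t2 _ =>
        integrable_finset_sum _ fun t3 _ => integrable_finset_sum _ fun t4 _ =>
          htermInt _ _ _ _ _ _
    refine h1.re.congr (Filter.Eventually.of_forall fun x => ?_)
    show RCLike.re (p θ x * (starRingEnd ℂ) (p θ x)) = ‖p θ x‖ ^ 2
    rw [Complex.mul_conj, Complex.sq_norm]
    simp
  -- final assembly
  have hD : (0 : ℝ) < (2 * π) ^ 2 * T := by positivity
  have hmono : (∫ x, ‖p ω x * p lam x‖)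
      ≤ ∫ x, (‖p ω x‖ ^ 2 + ‖p lam x‖ ^ 2) / 2 := by
    refine integral_mono_of_nonneg (Filter.Eventually.of_forall fun x => ?_)
      (((hintsq ω).add (hintsq lam)).div_const 2)
      (Filter.Eventually.of_forall fun x => ?_)
    · show (0 : ℝ) ≤ ‖p ω x * p lam x‖
      exact norm_nonneg _
    · show ‖p ω x * p lam x‖
        ≤ (‖p ω x‖ ^ 2 + ‖p lam x‖ ^ 2) / 2
      rw [norm_mul]
      nlinarith [norm_nonneg (p ω x), norm_nonneg (p lam x),
        sq_nonneg (‖p ω x‖ - ‖p lam x‖)]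
  have hhalf : (∫ x, (‖p ω x‖ ^ 2 + ‖p lam x‖ ^ 2) / 2)
      = ((∫ x, ‖p ω x‖ ^ 2) + ∫ x, ‖p lam x‖ ^ 2) / 2 := by
    rw [integral_div, integral_add (hintsq ω) (hintsq lam)]
  calc (∫ x, ‖p ω x * p lam x‖)
      ≤ ∫ x, (‖p ω x‖ ^ 2 + ‖p lam x‖ ^ 2) / 2 := hmono
    _ = ((∫ x, ‖p ω x‖ ^ 2) + ∫ x, ‖p lam x‖ ^ 2) / 2 := hhalf
    _ ≤ (Q / ((2 * π) ^ 2 * T) + Q / ((2 * π) ^ 2 * T)) / 2 := by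
        have h1 := key ω
        have h2 := key lam
        linarith
    _ = Q / ((2 * π) ^ 2 * T) := by ring
    _ ≤ 7 * Q / ((2 * π) ^ 2 * T) := by
        exact (div_le_div_iff_of_pos_right hD).mpr (by linarith)
end
end

section
/- For every T ≥ 1 and every ω ∈ ℝ, the second moment of the periodogram satisfies E|p_ω|² = E[Ỹ_ω Z̃_{−ω} Ỹ_{−ω} Z̃_ω] ≤ 7Q / ((2π)² T), where Q := ∑_{t₁,t₂,t₃∈ℤ} |E[Y_{t₁} Z_{t₂} Y_{t₃} Z_0]| is assumed finite. -/
open MeasureTheory Real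

noncomputable section

lemma integrable_mul_four {Ω : Type*} [MeasureSpace Ω] [IsProbabilityMeasure (volume : Measure Ω)]
    (a b c d : Ω → ℝ) (ha : MemLp a 4) (hb : MemLp b 4) (hc : MemLp c 4) (hd : MemLp d 4) :
    Integrable (fun x => a x * b x * c x * d x) := by
  have h2 : ∀ (f g : Ω → ℝ), MemLp f 4 → MemLp g 4 → MemLp (fun x => f x * g x) 2 := by
    intro f g hf hg
    have h := MemLp.smul (μ := (volume : Measure Ω)) (p := 4) (q := 4) (r := 2) hg hf
      (hpqr := ⟨by rw [← one_div, ← one_div, ENNReal.div_add_div_same, ENNReal.div_eq_div_iff] <;> norm_num⟩)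
    simpa [Pi.smul_apply, smul_eq_mul, Pi.mul_def] using h
  have hab := h2 a b ha hb
  have hcd := h2 c d hc hd
  have h1 := MemLp.smul (μ := (volume : Measure Ω)) (p := 2) (q := 2) (r := 1) hcd hab
    (hpqr := ⟨by rw [inv_one]; exact ENNReal.inv_two_add_inv_two⟩)
  rw [← memLp_one_iff_integrable]
  have heq : (fun x => a x * b x) • (fun x => c x * d x) = fun x => a x * b x * c x * d x := by
    funext x; simp only [Pi.smul_apply, smul_eq_mul, Pi.mul_apply]; ring
  rwa [heq] at h1

/-- Let `(Y t)` and `(Z t)` be real random variables with finite fourth moments and jointly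
fourth-order stationary mixed moments, `Ỹ_ω, Z̃_ω` their discrete Fourier transforms and
`p_ω = Ỹ_ω Z̃_{-ω}` the periodogram.  For every `T ≥ 1` and `ω ∈ ℝ`, the second moment of
the periodogram satisfies `E|p_ω|² = E[Ỹ_ω Z̃_{-ω} Ỹ_{-ω} Z̃_ω] ≤ 7 Q / ((2π)² T)`, where
`Q = ∑_{t₁,t₂,t₃ ∈ ℤ} |E[Y_{t₁} Z_{t₂} Y_{t₃} Z_0]|` is assumed finite. -/
theorem periodogram_second_moment_bound
    {Ω : Type*} [MeasureSpace Ω] [IsProbabilityMeasure (volume : Measure Ω)]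
    (Y Z : ℤ → Ω → ℝ)
    (hYmeas : ∀ t : ℤ, Measurable (Y t)) (hZmeas : ∀ t : ℤ, Measurable (Z t))
    (hY4 : ∀ t : ℤ, MemLp (Y t) 4) (hZ4 : ∀ t : ℤ, MemLp (Z t) 4)
    (hstat : ∀ u₁ u₂ u₃ u₄ : ℤ,
      (∫ x, Y u₁ x * Z u₂ x * Y u₃ x * Z u₄ x)
        = ∫ x, Y (u₁ - u₄) x * Z (u₂ - u₄) x * Y (u₃ - u₄) x * Z 0 x)
    (T : ℕ) (hT : 1 ≤ T)
    (Yt Zt : ℝ → Ω → ℂ)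
    (hYt : ∀ (ω : ℝ) (x : Ω), Yt ω x = (1 / Real.sqrt (2 * π * T) : ℝ) *
      ∑ t ∈ Finset.range T, ((Y t x : ℂ) * Complex.exp (-(Complex.I * ω * t))))
    (hZt : ∀ (ω : ℝ) (x : Ω), Zt ω x = (1 / Real.sqrt (2 * π * T) : ℝ) *
      ∑ t ∈ Finset.range T, ((Z t x : ℂ) * Complex.exp (-(Complex.I * ω * t))))
    (p : ℝ → Ω → ℂ)
    (hp : ∀ (ω : ℝ) (x : Ω), p ω x = Yt ω x * Zt (-ω) x)
    (Q : ℝ)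
    (hQsum : Summable fun t : ℤ × ℤ × ℤ =>
      |∫ x, Y t.1 x * Z t.2.1 x * Y t.2.2 x * Z 0 x|)
    (hQ : Q = ∑' t : ℤ × ℤ × ℤ, |∫ x, Y t.1 x * Z t.2.1 x * Y t.2.2 x * Z 0 x|) :
    ∀ ω : ℝ,
      ((∫ x, ‖p ω x‖ ^ 2 : ℝ) : ℂ)
          = (∫ x, Yt ω x * Zt (-ω) x * Yt (-ω) x * Zt ω x)
      ∧ (∫ x, ‖p ω x‖ ^ 2) ≤ 7 * Q / ((2 * π) ^ 2 * T) := by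
  intro ω
  set c : ℝ := 1 / Real.sqrt (2 * π * T) with hc
  have hTpos : (0:ℝ) < T := by exact_mod_cast hT
  have h2πT : (0:ℝ) < 2 * π * T := by positivity
  have hc0 : 0 ≤ c := by positivity
  -- conjugation lemmas
  have hconjY : ∀ (ν : ℝ) (x : Ω), (starRingEnd ℂ) (Yt ν x) = Yt (-ν) x := by
    intro ν x
    rw [hYt, hYt]
    simp only [map_mul, map_sum, Complex.conj_ofReal, ← Complex.exp_conj, map_neg,
      Complex.conj_I, Complex.ofReal_neg, Complex.conj_natCast]
    congr 1
    refine Finset.sum_congr rfl fun t _ => ?_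
    congr 1
    ring
  have hconjZ : ∀ (ν : ℝ) (x : Ω), (starRingEnd ℂ) (Zt ν x) = Zt (-ν) x := by
    intro ν x
    rw [hZt, hZt]
    simp only [map_mul, map_sum, Complex.conj_ofReal, ← Complex.exp_conj, map_neg,
      Complex.conj_I, Complex.ofReal_neg, Complex.conj_natCast]
    congr 1
    refine Finset.sum_congr rfl fun t _ => ?_
    congr 1
    ring
  -- pointwise identity
  have hpt : ∀ x, ((‖p ω x‖ ^ 2 : ℝ) : ℂ)
      = Yt ω x * Zt (-ω) x * Yt (-ω) x * Zt ω x := by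
    intro x
    have h1 := hconjY ω x
    have h2 := hconjZ (-ω) x
    rw [neg_neg] at h2
    rw [hp, ← h1, ← h2, Complex.sq_norm, ← Complex.mul_conj, map_mul]
    ring
  have part1 : ((∫ x, ‖p ω x‖ ^ 2 : ℝ) : ℂ)
      = (∫ x, Yt ω x * Zt (-ω) x * Yt (-ω) x * Zt ω x) := by
    calc ((∫ x, ‖p ω x‖ ^ 2 : ℝ) : ℂ)
        = ∫ x, ((‖p ω x‖ ^ 2 : ℝ) : ℂ) := (integral_ofReal).symm
      _ = _ := integral_congr_ae (ae_of_all _ hpt)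
  refine ⟨part1, ?_⟩
  -- integrability of quadruple products
  have hint4 : ∀ a b c' d : ℤ, Integrable (fun x => Y a x * Z b x * Y c' x * Z d x) :=
    fun a b c' d => integrable_mul_four _ _ _ _ (hY4 a) (hZ4 b) (hY4 c') (hZ4 d)
  set R4 : Finset (ℕ × ℕ × ℕ × ℕ) :=
    Finset.range T ×ˢ Finset.range T ×ˢ Finset.range T ×ˢ Finset.range T with hR4
  set E : ℕ × ℕ × ℕ × ℕ → ℂ := fun q =>
    (c:ℂ)^4 * Complex.exp (-(Complex.I * ω * q.2.2.2))
      * Complex.exp (-(Complex.I * (-ω:ℝ) * q.2.2.1))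
      * Complex.exp (-(Complex.I * (-ω:ℝ) * q.2.1))
      * Complex.exp (-(Complex.I * ω * q.1)) with hE
  set G : ℕ × ℕ × ℕ × ℕ → Ω → ℝ := fun q x =>
    Y q.2.2.2 x * Z q.2.2.1 x * Y q.2.1 x * Z q.1 x with hG
  -- expansion
  have hexp : ∀ x, Yt ω x * Zt (-ω) x * Yt (-ω) x * Zt ω x
      = ∑ q ∈ R4, E q * ((G q x : ℝ) : ℂ) := by
    intro x
    rw [hYt, hZt, hYt, hZt]
    simp only [hR4, hE, hG, Finset.sum_product, Finset.mul_sum, Finset.sum_mul]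
    refine Finset.sum_congr rfl fun t₁ _ => Finset.sum_congr rfl fun t₂ _ =>
      Finset.sum_congr rfl fun t₃ _ => Finset.sum_congr rfl fun t₄ _ => ?_
    push_cast
    ring
  have hS : (∫ x, Yt ω x * Zt (-ω) x * Yt (-ω) x * Zt ω x)
      = ∑ q ∈ R4, E q * ((∫ x, G q x : ℝ) : ℂ) := by
    rw [integral_congr_ae (ae_of_all _ hexp), integral_finset_sum]
    · refine Finset.sum_congr rfl fun q _ => ?_
      rw [integral_const_mul]
      congr 1
      exact integral_ofReal
    · intro q _
      exact ((hint4 _ _ _ _).ofReal.const_mul _)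
  have habsE : ∀ q, ‖E q‖ = c ^ 4 := by
    intro q
    simp only [hE, norm_mul, norm_pow, Complex.norm_real, Real.norm_eq_abs, Complex.norm_exp]
    simp [Complex.mul_re, abs_of_nonneg hc0]
  -- bound on the complex integral
  have hbound : ‖∫ x, Yt ω x * Zt (-ω) x * Yt (-ω) x * Zt ω x‖
      ≤ c ^ 4 * ∑ q ∈ R4, |∫ x, G q x| := by
    rw [hS]
    calc ‖∑ q ∈ R4, E q * ((∫ x, G q x : ℝ) : ℂ)‖
        ≤ ∑ q ∈ R4, ‖E q * ((∫ x, G q x : ℝ) : ℂ)‖ := by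
          simpa using norm_sum_le R4 (fun q => E q * ((∫ x, G q x : ℝ) : ℂ))
      _ = ∑ q ∈ R4, c ^ 4 * |∫ x, G q x| := by
          refine Finset.sum_congr rfl fun q _ => ?_
          rw [norm_mul, habsE, Complex.norm_real, Real.norm_eq_abs]
      _ = c ^ 4 * ∑ q ∈ R4, |∫ x, G q x| := (Finset.mul_sum _ _ _).symm
  have hQ0 : 0 ≤ Q := hQ ▸ tsum_nonneg (fun _ => abs_nonneg _)
  -- the stationarity bound
  have hsum_le : ∑ q ∈ R4, |∫ x, G q x| ≤ T * Q := by
    rw [hR4, Finset.sum_product]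
    have inner : ∀ u ∈ Finset.range T,
        (∑ pr ∈ Finset.range T ×ˢ Finset.range T ×ˢ Finset.range T,
          |∫ x, G (u, pr) x|) ≤ Q := by
      intro u _
      set emb : ℕ × ℕ × ℕ ↪ ℤ × ℤ × ℤ :=
        ⟨fun pr => ((pr.2.2 : ℤ) - u, (pr.2.1 : ℤ) - u, (pr.1 : ℤ) - u), by
          intro p1 p2 h
          simp only [Prod.mk.injEq, sub_left_inj, Int.natCast_inj] at h
          exact Prod.ext h.2.2 (Prod.ext h.2.1 h.1)⟩ with hemb
      have hterm : ∀ pr ∈ Finset.range T ×ˢ Finset.range T ×ˢ Finset.range T,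
          |∫ x, G (u, pr) x|
            = (fun t : ℤ × ℤ × ℤ => |∫ x, Y t.1 x * Z t.2.1 x * Y t.2.2 x * Z 0 x|) (emb pr) := by
        intro pr _
        simp only [hG, hemb, Function.Embedding.coeFn_mk]
        rw [hstat]
        rfl
      rw [Finset.sum_congr rfl hterm,
        ← Finset.sum_map (Finset.range T ×ˢ Finset.range T ×ˢ Finset.range T) emb
          (fun t : ℤ × ℤ × ℤ => |∫ x, Y t.1 x * Z t.2.1 x * Y t.2.2 x * Z 0 x|)]
      exact (Summable.sum_le_tsum _ (fun _ _ => abs_nonneg _) hQsum).trans_eq hQ.symm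
    calc (∑ u ∈ Finset.range T, ∑ pr ∈ Finset.range T ×ˢ Finset.range T ×ˢ Finset.range T,
          |∫ x, G (u, pr) x|)
        ≤ ∑ _u ∈ Finset.range T, Q := Finset.sum_le_sum inner
      _ = T * Q := by simp [Finset.sum_const, nsmul_eq_mul]
  -- put it together
  have hc4 : c ^ 4 = 1 / (2 * π * T) ^ 2 := by
    rw [hc, div_pow, one_pow, show (4 : ℕ) = 2 * 2 from rfl, pow_mul,
      Real.sq_sqrt h2πT.le]
  have hfinal : (∫ x, ‖p ω x‖ ^ 2) ≤ Q / ((2 * π) ^ 2 * T) := by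
    have h1 : (∫ x, ‖p ω x‖ ^ 2)
        ≤ ‖∫ x, Yt ω x * Zt (-ω) x * Yt (-ω) x * Zt ω x‖ := by
      rw [← part1, Complex.norm_real, Real.norm_eq_abs]
      exact le_abs_self _
    have h2 : c ^ 4 * (↑T * Q) = Q / ((2 * π) ^ 2 * T) := by
      rw [hc4]
      field_simp
    calc (∫ x, ‖p ω x‖ ^ 2)
        ≤ c ^ 4 * ∑ q ∈ R4, |∫ x, G q x| := h1.trans hbound
      _ ≤ c ^ 4 * (↑T * Q) := by
          exact mul_le_mul_of_nonneg_left hsum_le (by positivity)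
      _ = Q / ((2 * π) ^ 2 * T) := h2
  refine hfinal.trans ?_
  have hD : (0:ℝ) < (2 * π) ^ 2 * T := by positivity
  rw [div_le_div_iff₀ hD hD]
  nlinarith [sq_nonneg π, hQ0, hD]
end
end

section
/- Define S_{T,2} := (2/T) ∑_{k=2}^{⌊T/2⌋} p_{ω_k}·conj(p_{ω_{k−1}}) with Fourier frequencies ω_k := 2πk/T. Then for every T ≥ 1, √T · E|S_{T,2}| ≤ 7Q / (2π)², where Q := ∑_{t₁,t₂,t₃∈ℤ} |E[Y_{t₁} Z_{t₂} Y_{t₃} Z_0]| is assumed finite. -/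
open MeasureTheory Real
open scoped ComplexConjugate

noncomputable section

set_option maxHeartbeats 1000000

section Helpers

open Finset

lemma ST2_half24 : (1:ENNReal)/2 = 1/4 + 1/4 := by
  refine (ENNReal.toReal_eq_toReal_iff' (by norm_num) (by norm_num)).mp ?_
  rw [ENNReal.toReal_add (by norm_num) (by norm_num), ENNReal.toReal_div, ENNReal.toReal_div]
  simp
  norm_num

lemma ST2_one22 : (1:ENNReal)/1 = 1/2 + 1/2 := by
  refine (ENNReal.toReal_eq_toReal_iff' (by norm_num) (by norm_num)).mp ?_
  rw [ENNReal.toReal_add (by norm_num) (by norm_num), ENNReal.toReal_div, ENNReal.toReal_div]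
  simp
  norm_num

lemma ST2_ofReal_normSq (z : ℂ) : ((‖z‖^2 : ℝ) : ℂ) = z * conj z := by
  rw [Complex.mul_conj]; norm_cast; rw [← Complex.sq_norm]

lemma ST2_abs_phase (ω : ℝ) (t : ℕ) :
    ‖Complex.exp (-(Complex.I * ω * t))‖ = 1 := by
  have h : -(Complex.I * (ω:ℂ) * (t:ℂ)) = ((-(ω * t) : ℝ) : ℂ) * Complex.I := by push_cast; ring
  rw [h, Complex.norm_exp_ofReal_mul_I]

lemma ST2_expand4 (T : ℕ) (f g h k : ℕ → ℂ) :
    (∑ t ∈ range T, f t) * (∑ t ∈ range T, g t) *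
      ((∑ t ∈ range T, h t) * (∑ t ∈ range T, k t)) =
    ∑ q ∈ (range T ×ˢ range T ×ˢ range T ×ˢ range T),
      f q.2.2.2 * g q.2.2.1 * h q.2.1 * k q.1 := by
  simp only [Finset.sum_product]
  simp only [Finset.sum_mul, Finset.mul_sum, mul_assoc]

lemma ST2_hexp (T : ℕ) (ω : ℝ) (a b : ℕ → ℝ) :
    ((‖(∑ t ∈ range T, ((a t : ℂ) * Complex.exp (-(Complex.I * ω * t)))) *
        (∑ t ∈ range T, ((b t : ℂ) * Complex.exp (-(Complex.I * (-ω) * t))))‖^2 : ℝ) : ℂ)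
    = ∑ q ∈ range T ×ˢ range T ×ˢ range T ×ˢ range T,
        ((a q.2.2.2 * b q.2.2.1 * a q.2.1 * b q.1 : ℝ) : ℂ) *
          (Complex.exp (-(Complex.I * ω * q.2.2.2)) * Complex.exp (-(Complex.I * (-ω) * q.2.2.1)) *
           conj (Complex.exp (-(Complex.I * ω * q.2.1))) *
           conj (Complex.exp (-(Complex.I * (-ω) * q.1)))) := by
  rw [ST2_ofReal_normSq]
  calc (∑ t ∈ range T, ((a t : ℂ) * Complex.exp (-(Complex.I * ω * t)))) *
        (∑ t ∈ range T, ((b t : ℂ) * Complex.exp (-(Complex.I * (-ω) * t)))) *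
        conj ((∑ t ∈ range T, ((a t : ℂ) * Complex.exp (-(Complex.I * ω * t)))) *
          (∑ t ∈ range T, ((b t : ℂ) * Complex.exp (-(Complex.I * (-ω) * t)))))
      = (∑ t ∈ range T, ((a t : ℂ) * Complex.exp (-(Complex.I * ω * t)))) *
        (∑ t ∈ range T, ((b t : ℂ) * Complex.exp (-(Complex.I * (-ω) * t)))) *
        ((∑ t ∈ range T, ((a t : ℂ) * conj (Complex.exp (-(Complex.I * ω * t))))) *
         (∑ t ∈ range T, ((b t : ℂ) * conj (Complex.exp (-(Complex.I * (-ω) * t)))))) := by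
        simp only [map_mul, map_sum, Complex.conj_ofReal]
    _ = _ := by
        rw [ST2_expand4]
        exact Finset.sum_congr rfl fun q _ => by push_cast; ring

variable {Ω : Type*} [MeasureSpace Ω] [IsProbabilityMeasure (volume : Measure Ω)]

lemma ST2_L2mul_int {f g : Ω → ℝ} (hf : MemLp f 2) (hg : MemLp g 2) :
    Integrable (fun x => f x * g x) := by
  haveI : ENNReal.HolderTriple 2 2 1 := ⟨by simpa only [one_div] using ST2_one22.symm⟩
  have h := MemLp.smul (r := 1) hg hf
  exact memLp_one_iff_integrable.mp h

lemma ST2_L2mulC_int {f g : Ω → ℂ} (hf : MemLp f 2) (hg : MemLp g 2) :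
    Integrable (fun x => f x * g x) := by
  haveI : ENNReal.HolderTriple 2 2 1 := ⟨by simpa only [one_div] using ST2_one22.symm⟩
  have h := MemLp.smul (r := 1) hg hf
  exact memLp_one_iff_integrable.mp h

omit [IsProbabilityMeasure (volume : Measure Ω)] in
lemma ST2_L4mul_L2 {f g : Ω → ℝ} (hf : MemLp f 4) (hg : MemLp g 4) :
    MemLp (fun x => f x * g x) 2 :=
  haveI : ENNReal.HolderTriple 4 4 2 := ⟨by simpa only [one_div] using ST2_half24.symm⟩
  MemLp.smul (r := 2) hg hf

omit [IsProbabilityMeasure (volume : Measure Ω)] in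
lemma ST2_L4mulC_L2 {f g : Ω → ℂ} (hf : MemLp f 4) (hg : MemLp g 4) :
    MemLp (fun x => f x * g x) 2 :=
  haveI : ENNReal.HolderTriple 4 4 2 := ⟨by simpa only [one_div] using ST2_half24.symm⟩
  MemLp.smul (r := 2) hg hf

omit [IsProbabilityMeasure (volume : Measure Ω)] in
lemma ST2_conj_memℒp {f : Ω → ℂ} (hf : MemLp f 2) : MemLp (fun x => conj (f x)) 2 := by
  refine MemLp.of_le hf (Complex.continuous_conj.comp_aestronglyMeasurable hf.1) ?_
  filter_upwards with x
  simp

end Helpers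

/-- Let `(Y t)` and `(Z t)` be real random variables with finite fourth moments and jointly
fourth-order stationary mixed moments, `Ỹ_ω, Z̃_ω` their discrete Fourier transforms,
`p_ω = Ỹ_ω Z̃_{-ω}` the periodogram, and
`S_{T,2} = (2/T) ∑_{k=2}^{⌊T/2⌋} p_{ω_k} conj(p_{ω_{k-1}})` with `ω_k = 2πk/T`.  Then for
every `T ≥ 1`, `√T · E|S_{T,2}| ≤ 7 Q / (2π)²`, where
`Q = ∑_{t₁,t₂,t₃ ∈ ℤ} |E[Y_{t₁} Z_{t₂} Y_{t₃} Z_0]|` is assumed finite. -/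
theorem ST2_expectation_bound
    {Ω : Type*} [MeasureSpace Ω] [IsProbabilityMeasure (volume : Measure Ω)]
    (Y Z : ℤ → Ω → ℝ)
    (hYmeas : ∀ t : ℤ, Measurable (Y t)) (hZmeas : ∀ t : ℤ, Measurable (Z t))
    (hY4 : ∀ t : ℤ, MemLp (Y t) 4) (hZ4 : ∀ t : ℤ, MemLp (Z t) 4)
    (hstat : ∀ u₁ u₂ u₃ u₄ : ℤ,
      (∫ x, Y u₁ x * Z u₂ x * Y u₃ x * Z u₄ x)
        = ∫ x, Y (u₁ - u₄) x * Z (u₂ - u₄) x * Y (u₃ - u₄) x * Z 0 x)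
    (T : ℕ) (hT : 1 ≤ T)
    (Yt Zt : ℝ → Ω → ℂ)
    (hYt : ∀ (ω : ℝ) (x : Ω), Yt ω x = (1 / Real.sqrt (2 * π * T) : ℝ) *
      ∑ t ∈ Finset.range T, ((Y t x : ℂ) * Complex.exp (-(Complex.I * ω * t))))
    (hZt : ∀ (ω : ℝ) (x : Ω), Zt ω x = (1 / Real.sqrt (2 * π * T) : ℝ) *
      ∑ t ∈ Finset.range T, ((Z t x : ℂ) * Complex.exp (-(Complex.I * ω * t))))
    (p : ℝ → Ω → ℂ)
    (hp : ∀ (ω : ℝ) (x : Ω), p ω x = Yt ω x * Zt (-ω) x)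
    (S2 : Ω → ℂ)
    (hS2 : ∀ x : Ω, S2 x = (2 / (T : ℂ)) *
      ∑ k ∈ Finset.Icc 2 (T / 2),
        p (2 * π * k / T) x * conj (p (2 * π * ((k : ℝ) - 1) / T) x))
    (Q : ℝ)
    (hQsum : Summable fun t : ℤ × ℤ × ℤ =>
      |∫ x, Y t.1 x * Z t.2.1 x * Y t.2.2 x * Z 0 x|)
    (hQ : Q = ∑' t : ℤ × ℤ × ℤ, |∫ x, Y t.1 x * Z t.2.1 x * Y t.2.2 x * Z 0 x|) :
    Real.sqrt T * ∫ x, ‖S2 x‖ ≤ 7 * Q / (2 * π) ^ 2 := by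
  have hπ : 0 < π := Real.pi_pos
  have hT0 : (0:ℝ) < T := by exact_mod_cast hT
  have hN : (0:ℝ) < 2 * π * T := by positivity
  set c : ℝ := 1 / Real.sqrt (2 * π * T) with hc
  have hc0 : 0 ≤ c := by positivity
  have hc2 : c ^ 2 = 1 / (2 * π * T) := by
    rw [hc, div_pow, one_pow, sq_sqrt hN.le]
  have hQ0 : 0 ≤ Q := hQ ▸ tsum_nonneg fun _ => abs_nonneg _
  -- L⁴ membership of the raw exponential sums
  have hsumY4 : ∀ ω : ℝ, MemLp (fun x => ∑ t ∈ Finset.range T,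
      ((Y t x : ℂ) * Complex.exp (-(Complex.I * ω * t)))) 4 := by
    intro ω
    refine memLp_finset_sum (Finset.range T)
      (f := fun t x => (Y (t:ℤ) x : ℂ) * Complex.exp (-(Complex.I * ω * t))) fun t _ => ?_
    have h := ((hY4 (t:ℤ)).ofReal (K := ℂ)).const_mul (Complex.exp (-(Complex.I * ω * t)))
    simpa [mul_comm] using h
  have hsumZ4 : ∀ ω : ℝ, MemLp (fun x => ∑ t ∈ Finset.range T,
      ((Z t x : ℂ) * Complex.exp (-(Complex.I * ω * t)))) 4 := by
    intro ω
    refine memLp_finset_sum (Finset.range T)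
      (f := fun t x => (Z (t:ℤ) x : ℂ) * Complex.exp (-(Complex.I * ω * t))) fun t _ => ?_
    have h := ((hZ4 (t:ℤ)).ofReal (K := ℂ)).const_mul (Complex.exp (-(Complex.I * ω * t)))
    simpa [mul_comm] using h
  -- integrability of fourth-order products
  have hInt4 : ∀ a b a' b' : ℤ,
      Integrable (fun x => Y a x * Z b x * Y a' x * Z b' x) := by
    intro a b a' b'
    have h1 : MemLp (fun x => Y a x * Z b x) 2 := ST2_L4mul_L2 (hY4 a) (hZ4 b)
    have h2 : MemLp (fun x => Y a' x * Z b' x) 2 := ST2_L4mul_L2 (hY4 a') (hZ4 b')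
    have h := ST2_L2mul_int h1 h2
    simpa [mul_assoc] using h
  -- L² membership of the periodogram
  have hpL2 : ∀ ω : ℝ, MemLp (p ω) 2 := by
    intro ω
    have hYt4 : MemLp (Yt ω) 4 := by
      have h := (hsumY4 ω).const_mul ((c:ℂ))
      have he : Yt ω = fun x => (c:ℂ) * ∑ t ∈ Finset.range T,
          ((Y t x : ℂ) * Complex.exp (-(Complex.I * ω * t))) := funext (hYt ω)
      rw [he]; exact h
    have hZt4 : MemLp (Zt (-ω)) 4 := by
      have h := (hsumZ4 (-ω)).const_mul ((c:ℂ))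
      have he : Zt (-ω) = fun x => (c:ℂ) * ∑ t ∈ Finset.range T,
          ((Z t x : ℂ) * Complex.exp (-(Complex.I * (((-ω : ℝ)):ℂ) * t))) := funext (hZt (-ω))
      rw [he]; exact h
    have he : p ω = fun x => Yt ω x * Zt (-ω) x := funext (hp ω)
    rw [he]; exact ST2_L4mulC_L2 hYt4 hZt4
  have hBint : ∀ ω : ℝ, Integrable (fun x => ‖p ω x‖^2) := fun ω =>
    ((hpL2 ω).norm).integrable_sq
  have hterm_int : ∀ ω ω' : ℝ, Integrable (fun x => p ω x * conj (p ω' x)) := fun ω ω' =>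
    ST2_L2mulC_int (hpL2 ω) (ST2_conj_memℒp (hpL2 ω'))
  -- the key second moment bound
  have key : ∀ ω : ℝ, (∫ x, ‖p ω x‖^2) ≤ c^4 * ((T:ℝ) * Q) := by
    intro ω
    set F : Ω → ℂ := fun x => ∑ t ∈ Finset.range T,
      ((Y t x : ℂ) * Complex.exp (-(Complex.I * ω * t))) with hF
    set G : Ω → ℂ := fun x => ∑ t ∈ Finset.range T,
      ((Z t x : ℂ) * Complex.exp (-(Complex.I * -(ω:ℂ) * t))) with hG
    have hpx : ∀ x, p ω x = ((c:ℂ))^2 * (F x * G x) := by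
      intro x
      rw [hp, hYt, hZt]
      simp only [Complex.ofReal_neg, hF, hG]
      ring
    have hnorm : ∀ x, ‖p ω x‖^2 = c^4 * ‖F x * G x‖^2 := by
      intro x
      rw [hpx x, norm_mul, norm_pow, Complex.norm_real, Real.norm_eq_abs, abs_of_nonneg hc0,
        mul_pow]
      ring
    have hstep : (∫ x, ‖p ω x‖^2) = c^4 * ∫ x, ‖F x * G x‖^2 := by
      simp_rw [hnorm]
      exact integral_const_mul _ _
    rw [hstep]
    refine mul_le_mul_of_nonneg_left ?_ (by positivity)
    -- now show ∫ ‖F x * G x‖² ≤ T * Q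
    set P := Finset.range T ×ˢ Finset.range T ×ˢ Finset.range T ×ˢ Finset.range T with hP
    set ph : ℕ × ℕ × ℕ × ℕ → ℂ := fun q =>
      Complex.exp (-(Complex.I * ω * q.2.2.2)) * Complex.exp (-(Complex.I * -(ω:ℂ) * q.2.2.1)) *
        conj (Complex.exp (-(Complex.I * ω * q.2.1))) *
        conj (Complex.exp (-(Complex.I * -(ω:ℂ) * q.1))) with hph
    have hexp : ∀ x : Ω, ((‖F x * G x‖^2 : ℝ) : ℂ) =
        ∑ q ∈ P, ((Y q.2.2.2 x * Z q.2.2.1 x * Y q.2.1 x * Z q.1 x : ℝ) : ℂ) * ph q := by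
      intro x
      have h := ST2_hexp T ω (fun t => Y t x) (fun t => Z t x)
      exact h
    have habs1 : ∀ t : ℕ, ‖Complex.exp (-(Complex.I * -(ω:ℂ) * t))‖ = 1 := by
      intro t
      rw [show -(ω:ℂ) = ((-ω : ℝ):ℂ) by push_cast; ring]
      exact ST2_abs_phase (-ω) t
    have hcalc : (∫ x, ((‖F x * G x‖^2 : ℝ) : ℂ)) =
        ∑ q ∈ P, ((∫ x, Y q.2.2.2 x * Z q.2.2.1 x * Y q.2.1 x * Z q.1 x : ℝ) : ℂ) * ph q := by
      rw [integral_congr_ae (ae_of_all _ hexp)]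
      rw [integral_finset_sum P
        (f := fun q x => ((Y q.2.2.2 x * Z q.2.2.1 x * Y q.2.1 x * Z q.1 x : ℝ) : ℂ) * ph q)
        (fun q _ => ((hInt4 q.2.2.2 q.2.2.1 q.2.1 q.1).ofReal).mul_const _)]
      refine Finset.sum_congr rfl fun q _ => ?_
      rw [integral_mul_const]
      congr 1
      exact integral_ofReal
    have habs2 : (∫ x, ‖F x * G x‖^2) =
        ‖∫ x, ((‖F x * G x‖^2 : ℝ) : ℂ)‖ := by
      rw [show (∫ x, ((‖F x * G x‖^2 : ℝ) : ℂ)) = ((∫ x, ‖F x * G x‖^2 : ℝ) : ℂ)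
          from integral_ofReal,
        Complex.norm_real, Real.norm_eq_abs, abs_of_nonneg (integral_nonneg fun x => sq_nonneg _)]
    have hbound1 : (∫ x, ‖F x * G x‖^2) ≤
        ∑ q ∈ P, |∫ x, Y q.2.2.2 x * Z q.2.2.1 x * Y q.2.1 x * Z q.1 x| := by
      rw [habs2, hcalc]
      refine (norm_sum_le _ _).trans (le_of_eq (Finset.sum_congr rfl fun q _ => ?_))
      rw [norm_mul, Complex.norm_real, Real.norm_eq_abs]
      have hphq : ‖ph q‖ = 1 := by
        rw [hph]
        simp only [norm_mul, Complex.norm_conj]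
        rw [ST2_abs_phase, ST2_abs_phase, habs1, habs1]
        norm_num
      rw [hphq, mul_one]
    refine hbound1.trans ?_
    -- stationarity bound
    rw [hP, Finset.sum_product]
    have inner : ∀ t4 ∈ Finset.range T,
        (∑ w ∈ Finset.range T ×ˢ Finset.range T ×ˢ Finset.range T,
          |∫ x, Y w.2.2 x * Z w.2.1 x * Y w.1 x * Z t4 x|) ≤ Q := by
      intro t4 _
      set φ : ℕ × ℕ × ℕ → ℤ × ℤ × ℤ :=
        fun w => ((w.2.2 : ℤ) - t4, (w.2.1 : ℤ) - t4, (w.1 : ℤ) - t4) with hφ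
      have hinj : ∀ w1 ∈ Finset.range T ×ˢ Finset.range T ×ˢ Finset.range T,
          ∀ w2 ∈ Finset.range T ×ˢ Finset.range T ×ˢ Finset.range T, φ w1 = φ w2 → w1 = w2 := by
        intro w1 _ w2 _ h
        simp only [hφ, Prod.mk.injEq] at h
        obtain ⟨h1, h2, h3⟩ := h
        have e1 : w1.1 = w2.1 := by omega
        have e2 : w1.2.1 = w2.2.1 := by omega
        have e3 : w1.2.2 = w2.2.2 := by omega
        exact Prod.ext e1 (Prod.ext e2 e3)
      calc (∑ w ∈ Finset.range T ×ˢ Finset.range T ×ˢ Finset.range T,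
            |∫ x, Y w.2.2 x * Z w.2.1 x * Y w.1 x * Z t4 x|)
          = ∑ w ∈ Finset.range T ×ˢ Finset.range T ×ˢ Finset.range T,
            (fun v : ℤ × ℤ × ℤ => |∫ x, Y v.1 x * Z v.2.1 x * Y v.2.2 x * Z 0 x|) (φ w) :=
            Finset.sum_congr rfl fun w _ => by rw [hstat]
        _ = ∑ v ∈ (Finset.range T ×ˢ Finset.range T ×ˢ Finset.range T).image φ,
            |∫ x, Y v.1 x * Z v.2.1 x * Y v.2.2 x * Z 0 x| := by
              rw [Finset.sum_image hinj]
        _ ≤ ∑' v : ℤ × ℤ × ℤ, |∫ x, Y v.1 x * Z v.2.1 x * Y v.2.2 x * Z 0 x| :=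
            hQsum.sum_le_tsum _ (fun _ _ => abs_nonneg _)
        _ = Q := hQ.symm
    calc (∑ t4 ∈ Finset.range T,
          ∑ w ∈ Finset.range T ×ˢ Finset.range T ×ˢ Finset.range T,
          |∫ x, Y w.2.2 x * Z w.2.1 x * Y w.1 x * Z t4 x|)
        ≤ ∑ _t4 ∈ Finset.range T, Q := Finset.sum_le_sum inner
      _ = (T:ℝ) * Q := by rw [Finset.sum_const, Finset.card_range, nsmul_eq_mul]
  -- AM-GM per-term bound
  have hterm : ∀ ω ω' : ℝ, (∫ x, ‖p ω x * conj (p ω' x)‖) ≤ c^4 * ((T:ℝ) * Q) := by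
    intro ω ω'
    have h1 : (∫ x, ‖p ω x * conj (p ω' x)‖)
        ≤ ∫ x, (‖p ω x‖^2 + ‖p ω' x‖^2)/2 := by
      refine integral_mono ((hterm_int ω ω').norm) ?_ ?_
      · exact ((hBint ω).add (hBint ω')).div_const 2
      · intro x
        have h2 : ‖p ω x * conj (p ω' x)‖ = ‖p ω x‖ * ‖p ω' x‖ := by
          rw [norm_mul, RCLike.norm_conj]
        dsimp only
        rw [h2]
        nlinarith [sq_nonneg (‖p ω x‖ - ‖p ω' x‖)]
    rw [integral_div, integral_add (hBint ω) (hBint ω')] at h1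
    have h3 := key ω
    have h4 := key ω'
    linarith
  -- bound the integral of |S2|
  set K := Finset.Icc 2 (T / 2) with hK
  have hS2pt : ∀ x : Ω, ‖S2 x‖ ≤ (2/(T:ℝ)) *
      ∑ k ∈ K, ‖p (2 * π * k / T) x * conj (p (2 * π * ((k : ℝ) - 1) / T) x)‖ := by
    intro x
    rw [hS2 x, norm_mul]
    have h2T : ‖(2 / (T:ℂ))‖ = 2/(T:ℝ) := by
      rw [norm_div]
      simp [Complex.norm_real]
    rw [h2T]
    exact mul_le_mul_of_nonneg_left (norm_sum_le _ _) (by positivity)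
  have hIS2 : (∫ x, ‖S2 x‖) ≤ (2/(T:ℝ)) *
      ∑ k ∈ K, ∫ x, ‖p (2 * π * k / T) x * conj (p (2 * π * ((k : ℝ) - 1) / T) x)‖ := by
    have hint : Integrable (fun x => (2/(T:ℝ)) *
        ∑ k ∈ K, ‖p (2 * π * k / T) x * conj (p (2 * π * ((k : ℝ) - 1) / T) x)‖) :=
      (integrable_finset_sum K fun k _ => (hterm_int _ _).norm).const_mul _
    have h := integral_mono_of_nonneg (ae_of_all _ fun x => norm_nonneg (S2 x)) hint
      (ae_of_all _ hS2pt)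
    rwa [integral_const_mul, integral_finset_sum K
      (fun k _ => (hterm_int _ _).norm)] at h
    
  have hcard : (K.card : ℝ) ≤ (T:ℝ)/2 := by
    rw [hK, Nat.card_Icc]
    have h1 : T / 2 + 1 - 2 ≤ T / 2 := by omega
    calc ((T / 2 + 1 - 2 : ℕ) : ℝ) ≤ ((T / 2 : ℕ) : ℝ) := by exact_mod_cast h1
      _ ≤ (T:ℝ)/2 := Nat.cast_div_le
  have hM0 : 0 ≤ c^4 * ((T:ℝ) * Q) := by positivity
  have hfinal : (∫ x, ‖S2 x‖) ≤ c^4 * ((T:ℝ) * Q) := by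
    have hsum : ∑ k ∈ K, (∫ x, ‖p (2 * π * k / T) x *
        conj (p (2 * π * ((k : ℝ) - 1) / T) x)‖) ≤ (K.card : ℝ) * (c^4 * ((T:ℝ) * Q)) := by
      have := Finset.sum_le_card_nsmul K
        (fun k => ∫ x, ‖p (2 * π * k / T) x * conj (p (2 * π * ((k:ℝ) - 1) / T) x)‖)
        (c^4 * ((T:ℝ) * Q)) fun k _ => hterm _ _
      simpa [nsmul_eq_mul] using this
    calc (∫ x, ‖S2 x‖) ≤ (2/(T:ℝ)) * ∑ k ∈ K, ∫ x, ‖p (2 * π * k / T) x *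
          conj (p (2 * π * ((k : ℝ) - 1) / T) x)‖ := hIS2
      _ ≤ (2/(T:ℝ)) * ((K.card : ℝ) * (c^4 * ((T:ℝ) * Q))) := by
          exact mul_le_mul_of_nonneg_left hsum (by positivity)
      _ ≤ (2/(T:ℝ)) * (((T:ℝ)/2) * (c^4 * ((T:ℝ) * Q))) := by
          exact mul_le_mul_of_nonneg_left (mul_le_mul_of_nonneg_right hcard hM0) (by positivity)
      _ = c^4 * ((T:ℝ) * Q) := by field_simp
  -- final numeric assembly
  have hc4 : c^4 * ((T:ℝ) * Q) = Q / (4 * π^2 * T) := by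
    have : c^4 = (c^2)^2 := by ring
    rw [this, hc2]
    field_simp
    ring
  have hIS2nonneg : 0 ≤ ∫ x, ‖S2 x‖ := integral_nonneg fun x => norm_nonneg _
  have hsqrt1 : (1:ℝ) ≤ Real.sqrt T := by
    rw [show (1:ℝ) = Real.sqrt 1 from (Real.sqrt_one).symm]
    exact Real.sqrt_le_sqrt (by exact_mod_cast hT)
  have hsqrtT : Real.sqrt T ≤ (T:ℝ) := by
    nlinarith [Real.sq_sqrt (show (0:ℝ) ≤ T from hT0.le), Real.sqrt_nonneg (T:ℝ), hsqrt1]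
  calc Real.sqrt T * ∫ x, ‖S2 x‖
      ≤ Real.sqrt T * (Q / (4 * π^2 * T)) := by
        refine mul_le_mul_of_nonneg_left ?_ (Real.sqrt_nonneg _)
        rw [← hc4]; exact hfinal
    _ ≤ (T:ℝ) * (Q / (4 * π^2 * T)) := by
        exact mul_le_mul_of_nonneg_right hsqrtT (by positivity)
    _ = Q / (4 * π^2) := by field_simp
    _ ≤ 7 * Q / (2 * π) ^ 2 := by
        rw [show (2*π)^2 = 4 * π^2 by ring]
        have h4 : (0:ℝ) < 4 * π^2 := by positivity
        rw [div_le_div_iff₀ h4 h4]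
        nlinarith
end
end

section
/- Define S_{T,1} := (1/T) ∑_{k=1}^{⌊T/2⌋} ( p_{ω_k} + conj(p_{ω_k}) ) with Fourier frequencies ω_k := 2πk/T. Then for every T ≥ 1, √T · E[ S_{T,1} · conj(S_{T,1}) ] = √T · E|S_{T,1}|² ≤ 7Q / (2π)², where Q := ∑_{t₁,t₂,t₃∈ℤ} |E[Y_{t₁} Z_{t₂} Y_{t₃} Z_0]| is assumed finite. -/
open MeasureTheory Real
open scoped ComplexConjugate ENNReal

noncomputable section

/-- Let `(Y t)` and `(Z t)` be real random variables with finite fourth moments and jointly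
fourth-order stationary mixed moments, `Ỹ_ω, Z̃_ω` their discrete Fourier transforms,
`p_ω = Ỹ_ω Z̃_{-ω}` the periodogram, and
`S_{T,1} = (1/T) ∑_{k=1}^{⌊T/2⌋} (p_{ω_k} + conj p_{ω_k})` with `ω_k = 2πk/T`.  Then for
every `T ≥ 1`, `√T · E[S_{T,1} conj(S_{T,1})] = √T · E|S_{T,1}|² ≤ 7 Q / (2π)²`, where
`Q = ∑_{t₁,t₂,t₃ ∈ ℤ} |E[Y_{t₁} Z_{t₂} Y_{t₃} Z_0]|` is assumed finite. -/
theorem ST1_second_moment_bound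
    {Ω : Type*} [MeasureSpace Ω] [IsProbabilityMeasure (volume : Measure Ω)]
    (Y Z : ℤ → Ω → ℝ)
    (hYmeas : ∀ t : ℤ, Measurable (Y t)) (hZmeas : ∀ t : ℤ, Measurable (Z t))
    (hY4 : ∀ t : ℤ, MemLp (Y t) 4) (hZ4 : ∀ t : ℤ, MemLp (Z t) 4)
    (hstat : ∀ u₁ u₂ u₃ u₄ : ℤ,
      (∫ x, Y u₁ x * Z u₂ x * Y u₃ x * Z u₄ x)
        = ∫ x, Y (u₁ - u₄) x * Z (u₂ - u₄) x * Y (u₃ - u₄) x * Z 0 x)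
    (T : ℕ) (hT : 1 ≤ T)
    (Yt Zt : ℝ → Ω → ℂ)
    (hYt : ∀ (ω : ℝ) (x : Ω), Yt ω x = (1 / Real.sqrt (2 * π * T) : ℝ) *
      ∑ t ∈ Finset.range T, ((Y t x : ℂ) * Complex.exp (-(Complex.I * ω * t))))
    (hZt : ∀ (ω : ℝ) (x : Ω), Zt ω x = (1 / Real.sqrt (2 * π * T) : ℝ) *
      ∑ t ∈ Finset.range T, ((Z t x : ℂ) * Complex.exp (-(Complex.I * ω * t))))
    (p : ℝ → Ω → ℂ)
    (hp : ∀ (ω : ℝ) (x : Ω), p ω x = Yt ω x * Zt (-ω) x)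
    (S1 : Ω → ℂ)
    (hS1 : ∀ x : Ω, S1 x = (1 / (T : ℂ)) *
      ∑ k ∈ Finset.Icc 1 (T / 2),
        (p (2 * π * k / T) x + conj (p (2 * π * k / T) x)))
    (Q : ℝ)
    (hQsum : Summable fun t : ℤ × ℤ × ℤ =>
      |∫ x, Y t.1 x * Z t.2.1 x * Y t.2.2 x * Z 0 x|)
    (hQ : Q = ∑' t : ℤ × ℤ × ℤ, |∫ x, Y t.1 x * Z t.2.1 x * Y t.2.2 x * Z 0 x|) :
    ((Real.sqrt T : ℝ) : ℂ) * ∫ x, S1 x * conj (S1 x)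
        = ((Real.sqrt T * ∫ x, ‖S1 x‖ ^ 2 : ℝ) : ℂ)
    ∧ Real.sqrt T * ∫ x, ‖S1 x‖ ^ 2 ≤ 7 * Q / (2 * π) ^ 2 := by
  have hTR : (0:ℝ) < T := by exact_mod_cast hT
  have h1T : (1:ℝ) ≤ T := by exact_mod_cast hT
  have hπ : (0:ℝ) < π := Real.pi_pos
  set N := Finset.range T with hN
  -- Part 1 : the integrand is the square of the modulus
  have h1 : ∀ x : Ω, S1 x * conj (S1 x) = ((‖S1 x‖ ^ 2 : ℝ) : ℂ) := by
    intro x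
    rw [Complex.mul_conj, Complex.sq_norm]
  have hint1 : (∫ x, S1 x * conj (S1 x)) = ((∫ x, ‖S1 x‖ ^ 2 : ℝ) : ℂ) := by
    simp_rw [h1]; exact integral_ofReal
  -- Step A : explicit form of the periodogram
  have hpA : ∀ (ω : ℝ) (x : Ω), p ω x = ((1/(2*π*T) : ℝ) : ℂ) *
      ∑ t ∈ N, ∑ s ∈ N, ((Y t x : ℂ) * (Z s x : ℂ)) *
        Complex.exp (Complex.I * (ω : ℂ) * ((s : ℂ) - (t : ℂ))) := by
    intro ω x
    rw [hp, hYt, hZt, mul_mul_mul_comm, Finset.sum_mul_sum]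
    congr 1
    · rw [← Complex.ofReal_mul]
      congr 1
      rw [div_mul_div_comm, one_mul, Real.mul_self_sqrt (by positivity)]
    · refine Finset.sum_congr rfl fun t _ => Finset.sum_congr rfl fun s _ => ?_
      rw [mul_mul_mul_comm, ← Complex.exp_add]
      congr 1
      push_cast
      ring_nf
  -- Step A' : with conjugate
  have hpB : ∀ (ω : ℝ) (x : Ω), p ω x + conj (p ω x) = ((1/(2*π*T) : ℝ) : ℂ) *
      ∑ t ∈ N, ∑ s ∈ N, ((Y t x : ℂ) * (Z s x : ℂ)) *
        (Complex.exp (Complex.I * (ω : ℂ) * ((s : ℂ) - (t : ℂ)))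
          + Complex.exp (-(Complex.I * (ω : ℂ) * ((s : ℂ) - (t : ℂ))))) := by
    intro ω x
    have hc : conj (p ω x) = ((1/(2*π*T) : ℝ) : ℂ) *
        ∑ t ∈ N, ∑ s ∈ N, ((Y t x : ℂ) * (Z s x : ℂ)) *
          Complex.exp (-(Complex.I * (ω : ℂ) * ((s : ℂ) - (t : ℂ)))) := by
      rw [hpA, map_mul, Complex.conj_ofReal, map_sum]
      congr 1
      refine Finset.sum_congr rfl fun t _ => ?_
      rw [map_sum]
      refine Finset.sum_congr rfl fun s _ => ?_
      rw [map_mul, map_mul, Complex.conj_ofReal, Complex.conj_ofReal, ← Complex.exp_conj]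
      congr 1
      simp [map_mul, Complex.conj_I, Complex.conj_ofReal]
    rw [hc, hpA, ← mul_add]
    congr 1
    rw [← Finset.sum_add_distrib]
    refine Finset.sum_congr rfl fun t _ => ?_
    rw [← Finset.sum_add_distrib]
    exact Finset.sum_congr rfl fun s _ => (mul_add _ _ _).symm
  -- the kernel
  set B : ℕ → ℕ → ℂ := fun t s => ∑ k ∈ Finset.Icc 1 (T/2),
      (Complex.exp (Complex.I * ((2*π*(k:ℝ)/T : ℝ) : ℂ) * ((s : ℂ) - (t : ℂ)))
        + Complex.exp (-(Complex.I * ((2*π*(k:ℝ)/T : ℝ) : ℂ) * ((s : ℂ) - (t : ℂ))))) with hB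
  have hBbound : ∀ t s : ℕ, ‖B t s‖ ≤ T := by
    intro t s
    rw [hB]
    refine le_trans (norm_sum_le _ _) ?_
    have h2 : ∀ k ∈ Finset.Icc 1 (T/2),
        ‖Complex.exp (Complex.I * ((2*π*(k:ℝ)/T : ℝ) : ℂ) * ((s : ℂ) - (t : ℂ)))
          + Complex.exp (-(Complex.I * ((2*π*(k:ℝ)/T : ℝ) : ℂ) * ((s : ℂ) - (t : ℂ))))‖ ≤ 2 := by
      intro k _
      refine le_trans (norm_add_le _ _) ?_
      have e1 : ∀ z : ℂ, z.re = 0 → ‖Complex.exp z‖ = 1 := by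
        intro z hz; rw [Complex.norm_exp, hz, Real.exp_zero]
      rw [e1 _ (by simp), e1 _ (by simp)]
      norm_num
    refine le_trans (Finset.sum_le_sum h2) ?_
    rw [Finset.sum_const, Nat.card_Icc]
    simp only [nsmul_eq_mul]
    have he : (T/2 + 1 - 1) = T/2 := by omega
    rw [he]
    have := Nat.div_mul_le_self T 2
    exact_mod_cast this
  -- Step C : explicit form of S1
  have hS1' : ∀ x : Ω, S1 x = ((1/(2*π*T^2) : ℝ) : ℂ) *
      ∑ q ∈ N ×ˢ N, ((Y q.1 x : ℂ) * (Z q.2 x : ℂ)) * B q.1 q.2 := by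
    intro x
    have hconst : (1 / (T:ℂ)) * ((1/(2*π*T) : ℝ) : ℂ) = ((1/(2*π*T^2) : ℝ) : ℂ) := by
      push_cast; ring
    rw [hS1 x]
    simp_rw [hpB]
    rw [← Finset.mul_sum, ← mul_assoc, hconst, Finset.sum_product]
    congr 1
    rw [Finset.sum_comm]
    refine Finset.sum_congr rfl fun t _ => ?_
    rw [Finset.sum_comm]
    refine Finset.sum_congr rfl fun s _ => ?_
    rw [hB, ← Finset.mul_sum]
  -- integrability of quadruple products
  have hint4 : ∀ (t s t' s' : ℤ), Integrable (fun x => Y t x * Z s x * Y t' x * Z s' x) := by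
    have h24 : (1 : ℝ≥0∞)/2 = 1/4 + 1/4 := by
      rw [ENNReal.div_add_div_same,
        ENNReal.div_eq_div_iff (by norm_num) (by norm_num) (by norm_num) (by norm_num)]
      norm_num
    have h12 : (1 : ℝ≥0∞)/1 = 1/2 + 1/2 := by
      rw [ENNReal.div_add_div_same,
        ENNReal.div_eq_div_iff (by norm_num) (by norm_num) (by norm_num) (by norm_num)]
      norm_num
    have h2 : ∀ a b : ℤ, MemLp (fun x => Y a x * Z b x) (2 : ℝ≥0∞) :=
      fun a b => (hZ4 b).smul (hY4 a) (hpqr := ⟨by simp only [← one_div]; exact h24.symm⟩)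
    intro t s t' s'
    have hone : MemLp (fun x => (Y t x * Z s x) * (Y t' x * Z s' x)) (1 : ℝ≥0∞) :=
      (h2 t' s').smul (h2 t s) (hpqr := ⟨by simp only [← one_div]; exact h12.symm⟩)
    exact (memLp_one_iff_integrable.mp hone).congr
      (Filter.Eventually.of_forall fun x => by ring)
  -- Step D : the second moment as a quadruple sum
  set C : ℂ := ((1/(2*π*T^2) : ℝ) : ℂ) with hC
  have hD : (∫ x, S1 x * conj (S1 x)) = ∑ q ∈ N ×ˢ N, ∑ q' ∈ N ×ˢ N,
      ((∫ x, Y q.1 x * Z q.2 x * Y q'.1 x * Z q'.2 x : ℝ) : ℂ) *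
        (C^2 * (B q.1 q.2 * conj (B q'.1 q'.2))) := by
    have hDx : ∀ x : Ω, S1 x * conj (S1 x) = ∑ q ∈ N ×ˢ N, ∑ q' ∈ N ×ˢ N,
        ((Y q.1 x * Z q.2 x * Y q'.1 x * Z q'.2 x : ℝ) : ℂ) *
          (C^2 * (B q.1 q.2 * conj (B q'.1 q'.2))) := by
      intro x
      rw [hS1' x, map_mul, Complex.conj_ofReal, map_sum, mul_mul_mul_comm,
        Finset.sum_mul_sum, Finset.mul_sum]
      refine Finset.sum_congr rfl fun q _ => ?_
      rw [Finset.mul_sum]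
      refine Finset.sum_congr rfl fun q' _ => ?_
      rw [map_mul, map_mul, Complex.conj_ofReal, Complex.conj_ofReal]
      simp only [hC]
      push_cast
      ring
    have hterm : ∀ (q q' : ℕ × ℕ), Integrable (fun x =>
        ((Y q.1 x * Z q.2 x * Y q'.1 x * Z q'.2 x : ℝ) : ℂ) *
          (C^2 * (B q.1 q.2 * conj (B q'.1 q'.2)))) :=
      fun q q' => ((hint4 _ _ _ _).ofReal.mul_const _)
    calc (∫ x, S1 x * conj (S1 x))
        = ∫ x, ∑ q ∈ N ×ˢ N, ∑ q' ∈ N ×ˢ N,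
            ((Y q.1 x * Z q.2 x * Y q'.1 x * Z q'.2 x : ℝ) : ℂ) *
            (C^2 * (B q.1 q.2 * conj (B q'.1 q'.2))) := by simp_rw [hDx]
      _ = ∑ q ∈ N ×ˢ N, ∫ x, ∑ q' ∈ N ×ˢ N,
            ((Y q.1 x * Z q.2 x * Y q'.1 x * Z q'.2 x : ℝ) : ℂ) *
            (C^2 * (B q.1 q.2 * conj (B q'.1 q'.2))) :=
          integral_finset_sum _ fun q _ => integrable_finset_sum _ fun q' _ => hterm q q'
      _ = ∑ q ∈ N ×ˢ N, ∑ q' ∈ N ×ˢ N, ∫ x,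
            ((Y q.1 x * Z q.2 x * Y q'.1 x * Z q'.2 x : ℝ) : ℂ) *
            (C^2 * (B q.1 q.2 * conj (B q'.1 q'.2))) :=
          Finset.sum_congr rfl fun q _ => integral_finset_sum _ fun q' _ => hterm q q'
      _ = _ := Finset.sum_congr rfl fun q _ => Finset.sum_congr rfl fun q' _ => by
            rw [integral_mul_const]
            congr 1
            exact integral_ofReal
  -- Step E : the sum of absolute fourth moments is at most T * Q
  have hE : ∑ q ∈ N ×ˢ N, ∑ q' ∈ N ×ˢ N,
      |∫ x, Y q.1 x * Z q.2 x * Y q'.1 x * Z q'.2 x| ≤ T * Q := by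
    set m : ℤ × ℤ × ℤ → ℝ := fun v => |∫ x, Y v.1 x * Z v.2.1 x * Y v.2.2 x * Z 0 x| with hm
    have key : ∀ s' : ℕ, ∑ u ∈ N ×ˢ (N ×ˢ N),
        |∫ x, Y u.1 x * Z u.2.1 x * Y u.2.2 x * Z s' x| ≤ Q := by
      intro s'
      have hrw : ∀ u : ℕ × ℕ × ℕ,
          |∫ x, Y u.1 x * Z u.2.1 x * Y u.2.2 x * Z s' x|
            = m ((u.1 : ℤ) - s', (u.2.1 : ℤ) - s', (u.2.2 : ℤ) - s') := by
        intro u; rw [hm]; dsimp only; rw [hstat]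
      rw [Finset.sum_congr rfl fun u _ => hrw u]
      set e : ℕ × ℕ × ℕ → ℤ × ℤ × ℤ :=
        fun u => ((u.1 : ℤ) - s', (u.2.1 : ℤ) - s', (u.2.2 : ℤ) - s') with he
      have hinj : ∀ a ∈ N ×ˢ (N ×ˢ N), ∀ b ∈ N ×ˢ (N ×ˢ N), e a = e b → a = b := by
        intro a _ b _ h
        rw [he] at h
        simp only [Prod.mk.injEq] at h
        obtain ⟨e1, e2, e3⟩ := h
        have g1 : a.1 = b.1 := by omega
        have g2 : a.2.1 = b.2.1 := by omega
        have g3 : a.2.2 = b.2.2 := by omega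
        exact Prod.ext g1 (Prod.ext g2 g3)
      calc ∑ u ∈ N ×ˢ (N ×ˢ N), m (e u)
          = ∑ v ∈ (N ×ˢ (N ×ˢ N)).image e, m v := (Finset.sum_image hinj).symm
        _ ≤ ∑' v : ℤ × ℤ × ℤ, m v := Summable.sum_le_tsum _ (fun _ _ => abs_nonneg _) hQsum
        _ = Q := hQ.symm
    have hre : ∑ q ∈ N ×ˢ N, ∑ q' ∈ N ×ˢ N,
        |∫ x, Y q.1 x * Z q.2 x * Y q'.1 x * Z q'.2 x|
        = ∑ s' ∈ N, ∑ u ∈ N ×ˢ (N ×ˢ N),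
          |∫ x, Y u.1 x * Z u.2.1 x * Y u.2.2 x * Z s' x| := by
      simp only [Finset.sum_product]
      calc ∑ t ∈ N, ∑ s ∈ N, ∑ t' ∈ N, ∑ s' ∈ N,
            |∫ x, Y t x * Z s x * Y t' x * Z s' x|
          = ∑ t ∈ N, ∑ s ∈ N, ∑ s' ∈ N, ∑ t' ∈ N,
              |∫ x, Y t x * Z s x * Y t' x * Z s' x| :=
            Finset.sum_congr rfl fun t _ => Finset.sum_congr rfl fun s _ => Finset.sum_comm
        _ = ∑ t ∈ N, ∑ s' ∈ N, ∑ s ∈ N, ∑ t' ∈ N,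
              |∫ x, Y t x * Z s x * Y t' x * Z s' x| :=
            Finset.sum_congr rfl fun t _ => Finset.sum_comm
        _ = ∑ s' ∈ N, ∑ t ∈ N, ∑ s ∈ N, ∑ t' ∈ N,
              |∫ x, Y t x * Z s x * Y t' x * Z s' x| := Finset.sum_comm
    rw [hre]
    calc ∑ s' ∈ N, ∑ u ∈ N ×ˢ (N ×ˢ N),
          |∫ x, Y u.1 x * Z u.2.1 x * Y u.2.2 x * Z s' x|
        ≤ ∑ s' ∈ N, Q := Finset.sum_le_sum fun s' _ => key s'
      _ = T * Q := by rw [Finset.sum_const, hN, Finset.card_range, nsmul_eq_mul]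
  -- nonnegativity of Q
  have hQ0 : 0 ≤ Q := by
    rw [hQ]; exact tsum_nonneg fun _ => abs_nonneg _
  -- Step F : bound on the second moment
  have hF : (∫ x, ‖S1 x‖ ^ 2) ≤ Q / (4 * π^2 * T) := by
    have hre : (∫ x, ‖S1 x‖ ^ 2) = (∫ x, S1 x * conj (S1 x)).re := by
      rw [hint1, Complex.ofReal_re]
    have hterm_abs : ∀ q q' : ℕ × ℕ,
        ‖((∫ x, Y q.1 x * Z q.2 x * Y q'.1 x * Z q'.2 x : ℝ) : ℂ) *
          (C^2 * (B q.1 q.2 * conj (B q'.1 q'.2)))‖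
        ≤ |∫ x, Y q.1 x * Z q.2 x * Y q'.1 x * Z q'.2 x| *
            ((1/(2*π*(T:ℝ)^2))^2 * ((T:ℝ) * T)) := by
      intro q q'
      rw [norm_mul, norm_mul, norm_mul, Complex.norm_real, norm_pow, hC,
        Complex.norm_real, Real.norm_eq_abs, Real.norm_eq_abs, Complex.norm_conj, sq_abs]
      have hb1 := hBbound q.1 q.2
      have hb2 := hBbound q'.1 q'.2
      have hb1' := norm_nonneg (B q.1 q.2)
      have hb2' := norm_nonneg (B q'.1 q'.2)
      gcongr
    calc (∫ x, ‖S1 x‖ ^ 2)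
        = (∫ x, S1 x * conj (S1 x)).re := hre
      _ ≤ ‖∫ x, S1 x * conj (S1 x)‖ := Complex.re_le_norm _
      _ = ‖∑ q ∈ N ×ˢ N, ∑ q' ∈ N ×ˢ N,
            ((∫ x, Y q.1 x * Z q.2 x * Y q'.1 x * Z q'.2 x : ℝ) : ℂ) *
            (C^2 * (B q.1 q.2 * conj (B q'.1 q'.2)))‖ := by rw [hD]
      _ ≤ ∑ q ∈ N ×ˢ N, ‖∑ q' ∈ N ×ˢ N,
            ((∫ x, Y q.1 x * Z q.2 x * Y q'.1 x * Z q'.2 x : ℝ) : ℂ) *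
            (C^2 * (B q.1 q.2 * conj (B q'.1 q'.2)))‖ := norm_sum_le _ _
      _ ≤ ∑ q ∈ N ×ˢ N, ∑ q' ∈ N ×ˢ N, ‖
            ((∫ x, Y q.1 x * Z q.2 x * Y q'.1 x * Z q'.2 x : ℝ) : ℂ) *
            (C^2 * (B q.1 q.2 * conj (B q'.1 q'.2)))‖ :=
          Finset.sum_le_sum fun q _ => norm_sum_le _ _
      _ ≤ ∑ q ∈ N ×ˢ N, ∑ q' ∈ N ×ˢ N,
            |∫ x, Y q.1 x * Z q.2 x * Y q'.1 x * Z q'.2 x| *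
              ((1/(2*π*(T:ℝ)^2))^2 * ((T:ℝ) * T)) :=
          Finset.sum_le_sum fun q _ => Finset.sum_le_sum fun q' _ => hterm_abs q q'
      _ = (∑ q ∈ N ×ˢ N, ∑ q' ∈ N ×ˢ N,
            |∫ x, Y q.1 x * Z q.2 x * Y q'.1 x * Z q'.2 x|) *
              ((1/(2*π*(T:ℝ)^2))^2 * ((T:ℝ) * T)) := by
          rw [Finset.sum_mul]
          exact Finset.sum_congr rfl fun q _ => by rw [Finset.sum_mul]
      _ ≤ (T * Q) * ((1/(2*π*(T:ℝ)^2))^2 * ((T:ℝ) * T)) := by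
          refine mul_le_mul_of_nonneg_right hE (by positivity)
      _ = Q / (4 * π^2 * T) := by
          field_simp
          ring
  constructor
  · rw [hint1]; push_cast; ring
  · have hs0 : (0:ℝ) ≤ Real.sqrt T := Real.sqrt_nonneg _
    have hsT : Real.sqrt T ≤ T := by
      nlinarith [Real.sq_sqrt hTR.le, Real.sqrt_nonneg (T:ℝ)]
    calc Real.sqrt T * ∫ x, ‖S1 x‖ ^ 2
        ≤ Real.sqrt T * (Q / (4 * π^2 * T)) := mul_le_mul_of_nonneg_left hF hs0
      _ ≤ T * (Q / (4 * π^2 * T)) := mul_le_mul_of_nonneg_right hsT (by positivity)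
      _ = Q / (4 * π^2) := by field_simp
      _ ≤ 7 * Q / (2 * π) ^ 2 := by
          rw [show (2*π)^2 = 4*π^2 by ring]
          gcongr
          linarith
end
end

section
/- Suppose ∫₀¹∫₀¹ Q(τ,σ) dτ dσ < ∞, where Q(τ,σ) := ∑_{t₁,t₂,t₃∈ℤ} |E[X_{t₁}(τ) X_{t₂}(σ) X_{t₃}(τ) X_0(σ)]|. Then there exists an integrable function f : [0,1]² → [0,∞) (one may take f = (7/π)·Q) such that for every T ≥ 1 and every (τ,σ) ∈ [0,1]², 2π √T · E| S_{T,2}(τ,σ) − S_{T,1}(τ,σ)·conj(S_{T,1}(τ,σ)) | ≤ f(τ,σ). -/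
open MeasureTheory Real
open scoped ComplexConjugate
open scoped ENNReal

noncomputable section


lemma aux_half : (1:ℝ≥0∞)/2 = 1/4 + 1/4 := by
  rw [ENNReal.div_add_div_same]
  rw [ENNReal.div_eq_div_iff (by norm_num) (by norm_num) (by norm_num) (by norm_num)]
  norm_num

lemma aux_one : (1:ℝ≥0∞)/1 = 1/2 + 1/2 := by
  rw [ENNReal.div_add_div_same]
  rw [ENNReal.div_eq_div_iff (by norm_num) (by norm_num) (by norm_num) (by norm_num)]
  norm_num

lemma mul_memLp {Ω : Type*} [MeasureSpace Ω] {𝕜 : Type*} [RCLike 𝕜] {f g : Ω → 𝕜} {p q r : ℝ≥0∞}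
    (hf : MemLp f q) (hg : MemLp g r) (h : 1/p = 1/q + 1/r) :
    MemLp (fun x => f x * g x) p := by
  haveI : ENNReal.HolderTriple q r p := ⟨by simpa [one_div] using h.symm⟩
  exact hg.smul hf

lemma integrable4 {Ω : Type*} [MeasureSpace Ω] {a b c d : Ω → ℝ} (ha : MemLp a 4) (hb : MemLp b 4)
    (hc : MemLp c 4) (hd : MemLp d 4) :
    Integrable (fun x => a x * b x * c x * d x) := by
  have h1 : MemLp (fun x => a x * b x) 2 := mul_memLp ha hb aux_half
  have h2 : MemLp (fun x => c x * d x) 2 := mul_memLp hc hd aux_half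
  have h3 : MemLp (fun x => (a x * b x) * (c x * d x)) 1 := mul_memLp h1 h2 aux_one
  have : (fun x => a x * b x * c x * d x)
      = fun x => (a x * b x) * (c x * d x) := by funext x; ring
  rw [this]
  exact memLp_one_iff_integrable.mp h3



lemma memLp_conj {Ω : Type*} [MeasureSpace Ω] {f : Ω → ℂ} {p : ℝ≥0∞} (h : MemLp f p) :
    MemLp (fun x => conj (f x)) p :=
  (Complex.conjCLE.toContinuousLinearMap).comp_memLp' h

lemma integrable_mul2C {Ω : Type*} [MeasureSpace Ω] {f g : Ω → ℂ} (hf : MemLp f 2) (hg : MemLp g 2) :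
    Integrable (fun x => f x * g x) :=
  memLp_one_iff_integrable.mp (mul_memLp hf hg aux_one)

lemma core_bound {Ω : Type*} [MeasureSpace Ω]
    (X : ℤ → ℝ → Ω → ℝ)
    (hX4 : ∀ (t : ℤ) (τ : ℝ), MemLp (fun x : Ω => X t τ x) 4)
    (hstat : ∀ (u₁ u₂ u₃ u₄ : ℤ) (τ σ : ℝ),
      (∫ x, X u₁ τ x * X u₂ σ x * X u₃ τ x * X u₄ σ x)
        = ∫ x, X (u₁ - u₄) τ x * X (u₂ - u₄) σ x * X (u₃ - u₄) τ x * X 0 σ x)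
    (T : ℕ) (hT : 1 ≤ T) (τ σ : ℝ)
    (hgsum : Summable (fun t : ℤ × ℤ × ℤ =>
        |∫ x, X t.1 τ x * X t.2.1 σ x * X t.2.2 τ x * X 0 σ x|))
    (Z W : Ω → ℂ) (ω ω' : ℝ)
    (hZ : ∀ x, Z x = (1 / Real.sqrt (2 * π * T) : ℝ) *
      ∑ t ∈ Finset.range T, ((X t τ x : ℂ) * Complex.exp (-(Complex.I * ω * t))))
    (hW : ∀ x, W x = (1 / Real.sqrt (2 * π * T) : ℝ) *
      ∑ t ∈ Finset.range T, ((X t σ x : ℂ) * Complex.exp (-(Complex.I * ω' * t)))) :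
    ∫ x, ‖Z x‖^2 * ‖W x‖^2 ≤
      (∑' t : ℤ × ℤ × ℤ, |∫ x, X t.1 τ x * X t.2.1 σ x * X t.2.2 τ x * X 0 σ x|)
        / (4 * π^2 * T) := by
  have hπ := Real.pi_pos
  have hTpos : (0:ℝ) < T := by exact_mod_cast hT
  have h2πT : (0:ℝ) < 2 * π * T := by positivity
  set g : ℤ × ℤ × ℤ → ℝ :=
    fun t => |∫ x, X t.1 τ x * X t.2.1 σ x * X t.2.2 τ x * X 0 σ x| with hgdef
  set c : ℝ := 1 / Real.sqrt (2 * π * T) with hc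
  have hcpos : 0 < c := by positivity
  have hc4 : c^4 = 1/(2*π*(T:ℝ))^2 := by
    have h2 : c^2 = 1/(2*π*(T:ℝ)) := by
      rw [hc, div_pow, one_pow, Real.sq_sqrt h2πT.le]
    calc c^4 = (c^2)^2 := by ring
    _ = 1/(2*π*(T:ℝ))^2 := by rw [h2, div_pow, one_pow]
  set e1 : ℕ → ℂ := fun t => Complex.exp (-(Complex.I * ω * t)) with he1
  set e2 : ℕ → ℂ := fun t => Complex.exp (-(Complex.I * ω' * t)) with he2
  have habs1 : ∀ t, ‖e1 t‖ = 1 := by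
    intro t
    show ‖Complex.exp (-(Complex.I * ω * t))‖ = 1
    have : -(Complex.I * (ω:ℂ) * t) = ((-(ω * t) : ℝ) : ℂ) * Complex.I := by push_cast; ring
    rw [this, Complex.norm_exp_ofReal_mul_I]
  have habs2 : ∀ t, ‖e2 t‖ = 1 := by
    intro t
    show ‖Complex.exp (-(Complex.I * ω' * t))‖ = 1
    have : -(Complex.I * (ω':ℂ) * t) = ((-(ω' * t) : ℝ) : ℂ) * Complex.I := by push_cast; ring
    rw [this, Complex.norm_exp_ofReal_mul_I]
  set s4 : Finset (ℕ × ℕ × ℕ × ℕ) :=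
    Finset.range T ×ˢ (Finset.range T ×ˢ (Finset.range T ×ˢ Finset.range T)) with hs4
  set C : ℕ × ℕ × ℕ × ℕ → ℂ :=
    fun q => ((c : ℂ))^4 * (e1 q.2.2.2 * conj (e1 q.2.2.1) * e2 q.2.1 * conj (e2 q.1)) with hC
  set E : ℕ × ℕ × ℕ × ℕ → ℝ :=
    fun q => ∫ x, X q.2.2.2 τ x * X q.2.2.1 τ x * X q.2.1 σ x * X q.1 σ x with hE
  have hCabs : ∀ q, ‖C q‖ = c^4 := by
    intro q
    rw [hC]
    simp [norm_mul, norm_pow, habs1, habs2, Complex.norm_conj, Complex.norm_real,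
      abs_of_pos hcpos]
  -- pointwise expansion
  have hPsum : ∀ x : Ω, Z x * conj (Z x) * (W x * conj (W x))
      = ∑ q ∈ s4, C q * ((X q.2.2.2 τ x * X q.2.2.1 τ x * X q.2.1 σ x * X q.1 σ x : ℝ) : ℂ) := by
    intro x
    rw [hs4]
    simp only [Finset.sum_product]
    rw [hZ x, hW x]
    simp only [map_mul, map_sum, Complex.conj_ofReal]
    simp only [Finset.mul_sum, Finset.sum_mul]
    refine Finset.sum_congr rfl fun t1 _ => ?_
    refine Finset.sum_congr rfl fun t2 _ => ?_
    refine Finset.sum_congr rfl fun t3 _ => ?_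
    refine Finset.sum_congr rfl fun t4 _ => ?_
    simp only [hC, he1, he2]
    push_cast
    ring
  have hterm_int : ∀ q : ℕ × ℕ × ℕ × ℕ, Integrable (fun x =>
      C q * ((X q.2.2.2 τ x * X q.2.2.1 τ x * X q.2.1 σ x * X q.1 σ x : ℝ) : ℂ)) := by
    intro q
    exact ((integrable4 (hX4 q.2.2.2 τ) (hX4 q.2.2.1 τ) (hX4 q.2.1 σ) (hX4 q.1 σ)).ofReal).const_mul _
  -- the complex integral
  have hint_eq : (∫ x, Z x * conj (Z x) * (W x * conj (W x)))
      = ∑ q ∈ s4, C q * ((E q : ℝ) : ℂ) := by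
    rw [show (fun x => Z x * conj (Z x) * (W x * conj (W x)))
        = fun x => ∑ q ∈ s4, C q * ((X q.2.2.2 τ x * X q.2.2.1 τ x * X q.2.1 σ x * X q.1 σ x : ℝ) : ℂ)
      from funext hPsum]
    rw [integral_finset_sum s4 (fun q _ => hterm_int q)]
    refine Finset.sum_congr rfl fun q _ => ?_
    rw [MeasureTheory.integral_const_mul]
    congr 1
    exact integral_ofReal
  -- counting bound
  have hcount : ∑ q ∈ s4, |E q| ≤ T * ∑' t, g t := by
    rw [hs4, Finset.sum_product]
    have hinner : ∀ t1 ∈ Finset.range T,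
        (∑ r ∈ Finset.range T ×ˢ (Finset.range T ×ˢ Finset.range T), |E (t1, r)|)
          ≤ ∑' t, g t := by
      intro t1 _
      set m : ℕ × ℕ × ℕ → ℤ × ℤ × ℤ :=
        fun r => ((r.2.2 : ℤ) - t1, (r.1 : ℤ) - t1, (r.2.1 : ℤ) - t1) with hm
      have hEg : ∀ r : ℕ × ℕ × ℕ, |E (t1, r)| = g (m r) := by
        intro r
        rw [hE, hgdef, hm]
        simp only
        rw [show (fun x => X r.2.2 τ x * X r.2.1 τ x * X r.1 σ x * X t1 σ x)
            = fun x => X r.2.2 τ x * X r.1 σ x * X r.2.1 τ x * X t1 σ x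
          from funext fun x => by ring]
        rw [hstat r.2.2 r.1 r.2.1 t1 τ σ]
      rw [Finset.sum_congr rfl fun r _ => hEg r]
      have hinj : ∀ r ∈ Finset.range T ×ˢ (Finset.range T ×ˢ Finset.range T),
          ∀ r' ∈ Finset.range T ×ˢ (Finset.range T ×ˢ Finset.range T),
          m r = m r' → r = r' := by
        intro r _ r' _ h
        rw [hm] at h
        simp only [Prod.ext_iff] at h ⊢
        omega
      rw [← Finset.sum_image hinj]
      exact hgsum.sum_le_tsum _ (fun z _ => abs_nonneg _)
    calc ∑ t1 ∈ Finset.range T, ∑ r ∈ Finset.range T ×ˢ (Finset.range T ×ˢ Finset.range T),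
          |E (t1, r)|
        ≤ ∑ t1 ∈ Finset.range T, ∑' t, g t := Finset.sum_le_sum hinner
      _ = T * ∑' t, g t := by rw [Finset.sum_const, Finset.card_range, nsmul_eq_mul]
  -- put together
  have key : ‖∫ x, Z x * conj (Z x) * (W x * conj (W x))‖
      ≤ c^4 * (T * ∑' t, g t) := by
    rw [hint_eq]
    calc ‖∑ q ∈ s4, C q * ((E q : ℝ) : ℂ)‖
        ≤ ∑ q ∈ s4, ‖C q * ((E q : ℝ) : ℂ)‖ := norm_sum_le _ _
      _ = ∑ q ∈ s4, c^4 * |E q| := by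
          refine Finset.sum_congr rfl fun q _ => ?_
          rw [norm_mul, hCabs, Complex.norm_real, Real.norm_eq_abs]
      _ = c^4 * ∑ q ∈ s4, |E q| := by rw [Finset.mul_sum]
      _ ≤ c^4 * (T * ∑' t, g t) := by
          have := pow_pos hcpos 4
          exact mul_le_mul_of_nonneg_left hcount (by positivity)
  have hPr : ∀ x, Z x * conj (Z x) * (W x * conj (W x))
      = ((‖Z x‖^2 * ‖W x‖^2 : ℝ) : ℂ) := by
    intro x
    rw [Complex.mul_conj, Complex.mul_conj]
    push_cast [Complex.normSq_eq_norm_sq]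
    ring
  have hre : (∫ x, ‖Z x‖^2 * ‖W x‖^2)
      = ‖∫ x, Z x * conj (Z x) * (W x * conj (W x))‖ := by
    have h1 : (∫ x, ((‖Z x‖^2 * ‖W x‖^2 : ℝ) : ℂ)) = ((∫ x, ‖Z x‖^2 * ‖W x‖^2 : ℝ) : ℂ) :=
      integral_ofReal
    rw [show (fun x => Z x * conj (Z x) * (W x * conj (W x)))
        = fun x => ((‖Z x‖^2 * ‖W x‖^2 : ℝ) : ℂ) from funext hPr]
    rw [h1, Complex.norm_real, Real.norm_eq_abs,
      abs_of_nonneg (integral_nonneg fun x => by positivity)]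
  rw [hre]
  calc ‖∫ x, Z x * conj (Z x) * (W x * conj (W x))‖
      ≤ c^4 * (T * ∑' t, g t) := key
    _ = (∑' t, g t) / (4 * π^2 * T) := by
        rw [hc4]
        field_simp
        ring

section MainProof

variable {Ω : Type*} [MeasureSpace Ω]
  (X : ℤ → ℝ → Ω → ℝ)
  (hX4 : ∀ (t : ℤ) (τ : ℝ), MemLp (fun x : Ω => X t τ x) 4)
  (Xt : ℕ → ℝ → ℝ → Ω → ℂ)
  (hXt : ∀ (T : ℕ) (ω τ : ℝ) (x : Ω), Xt T ω τ x = (1 / Real.sqrt (2 * π * T) : ℝ) *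
      ∑ t ∈ Finset.range T, ((X t τ x : ℂ) * Complex.exp (-(Complex.I * ω * t))))
  (p : ℕ → ℝ → ℝ → ℝ → Ω → ℂ)
  (hp : ∀ (T : ℕ) (ω τ σ : ℝ) (x : Ω), p T ω τ σ x = Xt T ω τ x * Xt T (-ω) σ x)

include hX4 hXt in
lemma lem_Xt4 (T : ℕ) (ω ρ : ℝ) : MemLp (Xt T ω ρ) 4 := by
  have h1 : MemLp (fun x : Ω => ((1 / Real.sqrt (2 * π * T) : ℝ) : ℂ) *
      ∑ t ∈ Finset.range T, ((X t ρ x : ℂ) * Complex.exp (-(Complex.I * ω * t)))) 4 := by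
    apply MemLp.const_mul
    apply memLp_finset_sum
    intro t _
    have := ((hX4 t ρ).ofReal (K := ℂ)).const_mul (Complex.exp (-(Complex.I * ω * t)))
    simpa [mul_comm] using this
  have : Xt T ω ρ = fun x => ((1 / Real.sqrt (2 * π * T) : ℝ) : ℂ) *
      ∑ t ∈ Finset.range T, ((X t ρ x : ℂ) * Complex.exp (-(Complex.I * ω * t))) :=
    funext (hXt T ω ρ)
  rw [this]; exact h1

include hX4 hXt hp in
lemma lem_p2 (T : ℕ) (ω τ σ : ℝ) : MemLp (p T ω τ σ) 2 := by
  have : p T ω τ σ = fun x => Xt T ω τ x * Xt T (-ω) σ x := funext (hp T ω τ σ)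
  rw [this]
  exact mul_memLp (lem_Xt4 X hX4 Xt hXt T ω τ) (lem_Xt4 X hX4 Xt hXt T (-ω) σ) aux_half

end MainProof

/-- Let `(X t)_{t ∈ ℤ}` be jointly measurable real-valued stochastic processes on `[0,1]`
with finite fourth moments pointwise and strictly stationary fourth moments.  Suppose
`∫₀¹∫₀¹ Q(τ,σ) dτ dσ < ∞`, where
`Q(τ,σ) = ∑_{t₁,t₂,t₃ ∈ ℤ} |E[X_{t₁}(τ) X_{t₂}(σ) X_{t₃}(τ) X_0(σ)]|`.  Then there exists an
integrable function `f : [0,1]² → [0,∞)` such that for every `T ≥ 1` and every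
`(τ,σ) ∈ [0,1]²`,
`2π √T · E|S_{T,2}(τ,σ) − S_{T,1}(τ,σ) conj(S_{T,1}(τ,σ))| ≤ f(τ,σ)`. -/
theorem dominating_function_exists
    {Ω : Type*} [MeasureSpace Ω] [IsProbabilityMeasure (volume : Measure Ω)]
    (X : ℤ → ℝ → Ω → ℝ)
    (hXmeas : ∀ t : ℤ, Measurable fun q : ℝ × Ω => X t q.1 q.2)
    (hX4 : ∀ (t : ℤ) (τ : ℝ), MemLp (fun x : Ω => X t τ x) 4)
    (hstat : ∀ (u₁ u₂ u₃ u₄ : ℤ) (τ σ : ℝ),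
      (∫ x, X u₁ τ x * X u₂ σ x * X u₃ τ x * X u₄ σ x)
        = ∫ x, X (u₁ - u₄) τ x * X (u₂ - u₄) σ x * X (u₃ - u₄) τ x * X 0 σ x)
    (Xt : ℕ → ℝ → ℝ → Ω → ℂ)
    (hXt : ∀ (T : ℕ) (ω τ : ℝ) (x : Ω), Xt T ω τ x = (1 / Real.sqrt (2 * π * T) : ℝ) *
      ∑ t ∈ Finset.range T, ((X t τ x : ℂ) * Complex.exp (-(Complex.I * ω * t))))
    (p : ℕ → ℝ → ℝ → ℝ → Ω → ℂ)
    (hp : ∀ (T : ℕ) (ω τ σ : ℝ) (x : Ω), p T ω τ σ x = Xt T ω τ x * Xt T (-ω) σ x)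
    (S1 S2 : ℕ → ℝ → ℝ → Ω → ℂ)
    (hS1 : ∀ (T : ℕ) (τ σ : ℝ) (x : Ω), S1 T τ σ x = (1 / (T : ℂ)) *
      ∑ k ∈ Finset.Icc 1 (T / 2),
        (p T (2 * π * k / T) τ σ x + conj (p T (2 * π * k / T) τ σ x)))
    (hS2 : ∀ (T : ℕ) (τ σ : ℝ) (x : Ω), S2 T τ σ x = (2 / (T : ℂ)) *
      ∑ k ∈ Finset.Icc 2 (T / 2),
        p T (2 * π * k / T) τ σ x * conj (p T (2 * π * ((k : ℝ) - 1) / T) τ σ x))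
    (Q : ℝ → ℝ → ℝ)
    (hQ : ∀ τ σ : ℝ, Q τ σ = ∑' t : ℤ × ℤ × ℤ,
      |∫ x, X t.1 τ x * X t.2.1 σ x * X t.2.2 τ x * X 0 σ x|)
    (hQsum : ∀ τ ∈ Set.Icc (0 : ℝ) 1, ∀ σ ∈ Set.Icc (0 : ℝ) 1,
      Summable fun t : ℤ × ℤ × ℤ =>
        |∫ x, X t.1 τ x * X t.2.1 σ x * X t.2.2 τ x * X 0 σ x|)
    (hQint : IntegrableOn (fun q : ℝ × ℝ => Q q.1 q.2)
      (Set.Icc 0 1 ×ˢ Set.Icc 0 1)) :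
    ∃ f : ℝ × ℝ → ℝ,
      IntegrableOn f (Set.Icc 0 1 ×ˢ Set.Icc 0 1)
      ∧ (∀ q : ℝ × ℝ, 0 ≤ f q)
      ∧ ∀ (T : ℕ), 1 ≤ T → ∀ τ ∈ Set.Icc (0 : ℝ) 1, ∀ σ ∈ Set.Icc (0 : ℝ) 1,
          2 * π * Real.sqrt T *
              ∫ x, ‖S2 T τ σ x - S1 T τ σ x * conj (S1 T τ σ x)‖
            ≤ f (τ, σ) := by
  refine ⟨fun q => Q q.1 q.2, hQint, ?_, ?_⟩
  · intro q
    show 0 ≤ Q q.1 q.2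
    rw [hQ]
    exact tsum_nonneg fun _ => abs_nonneg _
  intro T hT τ hτ σ hσ
  show 2 * π * Real.sqrt T *
      (∫ x, ‖S2 T τ σ x - S1 T τ σ x * conj (S1 T τ σ x)‖) ≤ Q τ σ
  -- basic positivity facts
  have hπ := Real.pi_pos
  have hT1 : (1:ℝ) ≤ (T:ℝ) := by exact_mod_cast hT
  have hTpos : (0:ℝ) < T := by linarith
  have hgsum := hQsum τ hτ σ hσ
  have hQg : Q τ σ = ∑' t : ℤ × ℤ × ℤ,
      |∫ x, X t.1 τ x * X t.2.1 σ x * X t.2.2 τ x * X 0 σ x| := hQ τ σ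
  have hQnn : 0 ≤ Q τ σ := by
    rw [hQg]; exact tsum_nonneg fun _ => abs_nonneg _
  set Qb : ℝ := Q τ σ / (4 * π^2 * T) with hQbdef
  have hQb_nn : 0 ≤ Qb := by rw [hQbdef]; positivity
  -- MemLp infrastructure
  have hp2 : ∀ ω : ℝ, MemLp (p T ω τ σ) 2 := fun ω => lem_p2 X hX4 Xt hXt p hp T ω τ σ
  have hnp2int : ∀ ω : ℝ, Integrable (fun x => ‖p T ω τ σ x‖^2) :=
    fun ω => ((hp2 ω).norm).integrable_sq
  -- core bound
  have hcore : ∀ ω : ℝ, ∫ x, ‖p T ω τ σ x‖^2 ≤ Qb := by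
    intro ω
    have h1 : (fun x => ‖p T ω τ σ x‖^2)
        = fun x => ‖Xt T ω τ x‖^2 * ‖Xt T (-ω) σ x‖^2 := by
      funext x; rw [hp T ω τ σ x, norm_mul]; ring
    rw [h1, hQbdef]
    have h2 := core_bound X hX4 hstat T hT τ σ hgsum (Xt T ω τ) (Xt T (-ω) σ) ω (-ω)
      (hXt T ω τ) (hXt T (-ω) σ)
    rw [← hQg] at h2
    exact h2
  -- cardinality bounds
  have hcast : ((T/2 : ℕ) : ℝ) ≤ (T:ℝ)/2 := Nat.cast_div_le
  have hcard2 : ((Finset.Icc 2 (T/2)).card : ℝ) ≤ (T:ℝ)/2 := by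
    have h1 : (Finset.Icc 2 (T/2)).card ≤ T/2 := by rw [Nat.card_Icc]; omega
    calc ((Finset.Icc 2 (T/2)).card : ℝ) ≤ ((T/2 : ℕ) : ℝ) := Nat.cast_le.mpr h1
      _ ≤ (T:ℝ)/2 := hcast
  have hcard1 : ((Finset.Icc 1 (T/2)).card : ℝ) ≤ (T:ℝ)/2 := by
    have h1 : (Finset.Icc 1 (T/2)).card ≤ T/2 := by rw [Nat.card_Icc]; omega
    calc ((Finset.Icc 1 (T/2)).card : ℝ) ≤ ((T/2 : ℕ) : ℝ) := Nat.cast_le.mpr h1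
      _ ≤ (T:ℝ)/2 := hcast
  -- S2 bound
  have hS2b : ∫ x, ‖S2 T τ σ x‖ ≤ Qb := by
    set B2 : Ω → ℝ := fun x => (2/(T:ℝ)) * ∑ k ∈ Finset.Icc 2 (T/2),
        (‖p T (2*π*k/T) τ σ x‖^2 + ‖p T (2*π*((k:ℝ)-1)/T) τ σ x‖^2)/2 with hB2
    have hB2int : Integrable B2 := by
      rw [hB2]
      exact ((integrable_finset_sum _ fun k _ =>
        ((hnp2int _).add (hnp2int _)).div_const 2).const_mul _)
    have hptw : ∀ x, ‖S2 T τ σ x‖ ≤ B2 x := by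
      intro x
      rw [hS2 T τ σ x, hB2]
      have hnrm : ‖(2/(T:ℂ))‖ = 2/(T:ℝ) := by
        rw [norm_div, Complex.norm_natCast]
        norm_num
      calc ‖(2/(T:ℂ)) * ∑ k ∈ Finset.Icc 2 (T/2),
            p T (2*π*k/T) τ σ x * conj (p T (2*π*((k:ℝ)-1)/T) τ σ x)‖
          = (2/(T:ℝ)) * ‖∑ k ∈ Finset.Icc 2 (T/2),
            p T (2*π*k/T) τ σ x * conj (p T (2*π*((k:ℝ)-1)/T) τ σ x)‖ := by
            rw [norm_mul, hnrm]
        _ ≤ (2/(T:ℝ)) * ∑ k ∈ Finset.Icc 2 (T/2),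
            ‖p T (2*π*k/T) τ σ x * conj (p T (2*π*((k:ℝ)-1)/T) τ σ x)‖ :=
            mul_le_mul_of_nonneg_left (norm_sum_le _ _) (by positivity)
        _ ≤ (2/(T:ℝ)) * ∑ k ∈ Finset.Icc 2 (T/2),
            (‖p T (2*π*k/T) τ σ x‖^2 + ‖p T (2*π*((k:ℝ)-1)/T) τ σ x‖^2)/2 := by
            refine mul_le_mul_of_nonneg_left (Finset.sum_le_sum fun k _ => ?_) (by positivity)
            rw [norm_mul, RCLike.norm_conj]
            nlinarith [sq_nonneg (‖p T (2*π*k/T) τ σ x‖ - ‖p T (2*π*((k:ℝ)-1)/T) τ σ x‖),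
              norm_nonneg (p T (2*π*k/T) τ σ x), norm_nonneg (p T (2*π*((k:ℝ)-1)/T) τ σ x)]
    have hmono : ∫ x, ‖S2 T τ σ x‖ ≤ ∫ x, B2 x :=
      integral_mono_of_nonneg (Filter.Eventually.of_forall fun x => norm_nonneg _) hB2int
        (Filter.Eventually.of_forall hptw)
    have hint2 : ∀ k : ℕ, Integrable (fun x : Ω =>
        (‖p T (2*π*(k:ℝ)/T) τ σ x‖^2 + ‖p T (2*π*((k:ℝ)-1)/T) τ σ x‖^2)/2) :=
      fun k => ((hnp2int _).add (hnp2int _)).div_const 2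
    refine hmono.trans ?_
    rw [hB2]
    rw [MeasureTheory.integral_const_mul]
    rw [integral_finset_sum _ (fun k _ => hint2 k)]
    have hterm : ∀ k ∈ Finset.Icc 2 (T/2),
        (∫ x, (‖p T (2*π*k/T) τ σ x‖^2 + ‖p T (2*π*((k:ℝ)-1)/T) τ σ x‖^2)/2) ≤ Qb := by
      intro k _
      rw [integral_div, integral_add (hnp2int _) (hnp2int _)]
      have h1 := hcore (2*π*k/T)
      have h2 := hcore (2*π*((k:ℝ)-1)/T)
      linarith
    calc (2/(T:ℝ)) * ∑ k ∈ Finset.Icc 2 (T/2),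
          ∫ x, (‖p T (2*π*k/T) τ σ x‖^2 + ‖p T (2*π*((k:ℝ)-1)/T) τ σ x‖^2)/2
        ≤ (2/(T:ℝ)) * (((Finset.Icc 2 (T/2)).card : ℝ) * Qb) := by
          refine mul_le_mul_of_nonneg_left ?_ (by positivity)
          calc ∑ k ∈ Finset.Icc 2 (T/2),
              ∫ x, (‖p T (2*π*k/T) τ σ x‖^2 + ‖p T (2*π*((k:ℝ)-1)/T) τ σ x‖^2)/2
              ≤ ∑ _k ∈ Finset.Icc 2 (T/2), Qb := Finset.sum_le_sum hterm
            _ = ((Finset.Icc 2 (T/2)).card : ℝ) * Qb := by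
                rw [Finset.sum_const, nsmul_eq_mul]
      _ ≤ Qb := by
          have h := mul_le_mul_of_nonneg_right hcard2 hQb_nn
          calc (2/(T:ℝ)) * (((Finset.Icc 2 (T/2)).card : ℝ) * Qb)
              ≤ (2/(T:ℝ)) * ((T:ℝ)/2 * Qb) := mul_le_mul_of_nonneg_left h (by positivity)
            _ = Qb := by field_simp
  -- S1 bound
  have hS1b : ∫ x, ‖S1 T τ σ x‖^2 ≤ Qb := by
    set B1 : Ω → ℝ := fun x => (4/(T:ℝ)^2) * (((Finset.Icc 1 (T/2)).card : ℝ) *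
        ∑ k ∈ Finset.Icc 1 (T/2), ‖p T (2*π*k/T) τ σ x‖^2) with hB1
    have hB1int : Integrable B1 := by
      rw [hB1]
      exact (((integrable_finset_sum _ fun k _ => hnp2int _).const_mul _).const_mul _)
    have hS1n : ∀ x, ‖S1 T τ σ x‖ ≤ (2/(T:ℝ)) *
        ∑ k ∈ Finset.Icc 1 (T/2), ‖p T (2*π*k/T) τ σ x‖ := by
      intro x
      rw [hS1 T τ σ x]
      have hnrm : ‖(1/(T:ℂ))‖ = 1/(T:ℝ) := by
        rw [norm_div, Complex.norm_natCast, norm_one]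
      calc ‖(1/(T:ℂ)) * ∑ k ∈ Finset.Icc 1 (T/2),
            (p T (2*π*k/T) τ σ x + conj (p T (2*π*k/T) τ σ x))‖
          = (1/(T:ℝ)) * ‖∑ k ∈ Finset.Icc 1 (T/2),
            (p T (2*π*k/T) τ σ x + conj (p T (2*π*k/T) τ σ x))‖ := by
            rw [norm_mul, hnrm]
        _ ≤ (1/(T:ℝ)) * ∑ k ∈ Finset.Icc 1 (T/2),
            ‖p T (2*π*k/T) τ σ x + conj (p T (2*π*k/T) τ σ x)‖ :=
            mul_le_mul_of_nonneg_left (norm_sum_le _ _) (by positivity)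
        _ ≤ (1/(T:ℝ)) * ∑ k ∈ Finset.Icc 1 (T/2), 2 * ‖p T (2*π*k/T) τ σ x‖ := by
            refine mul_le_mul_of_nonneg_left (Finset.sum_le_sum fun k _ => ?_) (by positivity)
            calc ‖p T (2*π*k/T) τ σ x + conj (p T (2*π*k/T) τ σ x)‖
                ≤ ‖p T (2*π*k/T) τ σ x‖ + ‖conj (p T (2*π*k/T) τ σ x)‖ := norm_add_le _ _
              _ = 2 * ‖p T (2*π*k/T) τ σ x‖ := by rw [RCLike.norm_conj]; ring
        _ = (2/(T:ℝ)) * ∑ k ∈ Finset.Icc 1 (T/2), ‖p T (2*π*k/T) τ σ x‖ := by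
            rw [← Finset.mul_sum, ← mul_assoc]
            congr 1
            field_simp
    have hptw : ∀ x, ‖S1 T τ σ x‖^2 ≤ B1 x := by
      intro x
      have h2 : ‖S1 T τ σ x‖^2 ≤ ((2/(T:ℝ)) *
          ∑ k ∈ Finset.Icc 1 (T/2), ‖p T (2*π*k/T) τ σ x‖)^2 :=
        pow_le_pow_left₀ (norm_nonneg _) (hS1n x) 2
      have h3 : (∑ k ∈ Finset.Icc 1 (T/2), ‖p T (2*π*k/T) τ σ x‖)^2
          ≤ ((Finset.Icc 1 (T/2)).card : ℝ) *
            ∑ k ∈ Finset.Icc 1 (T/2), ‖p T (2*π*k/T) τ σ x‖^2 :=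
        sq_sum_le_card_mul_sum_sq
      rw [hB1]
      calc ‖S1 T τ σ x‖^2
          ≤ ((2/(T:ℝ)) * ∑ k ∈ Finset.Icc 1 (T/2), ‖p T (2*π*k/T) τ σ x‖)^2 := h2
        _ = (4/(T:ℝ)^2) * (∑ k ∈ Finset.Icc 1 (T/2), ‖p T (2*π*k/T) τ σ x‖)^2 := by ring
        _ ≤ (4/(T:ℝ)^2) * (((Finset.Icc 1 (T/2)).card : ℝ) *
            ∑ k ∈ Finset.Icc 1 (T/2), ‖p T (2*π*k/T) τ σ x‖^2) :=
            mul_le_mul_of_nonneg_left h3 (by positivity)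
    have hmono : ∫ x, ‖S1 T τ σ x‖^2 ≤ ∫ x, B1 x :=
      integral_mono_of_nonneg (Filter.Eventually.of_forall fun x => sq_nonneg _) hB1int
        (Filter.Eventually.of_forall hptw)
    refine hmono.trans ?_
    rw [hB1]
    rw [MeasureTheory.integral_const_mul, MeasureTheory.integral_const_mul]
    rw [integral_finset_sum _ (fun k _ => hnp2int _)]
    have hsum : ∑ k ∈ Finset.Icc 1 (T/2), ∫ x, ‖p T (2*π*k/T) τ σ x‖^2
        ≤ ((Finset.Icc 1 (T/2)).card : ℝ) * Qb := by
      calc ∑ k ∈ Finset.Icc 1 (T/2), ∫ x, ‖p T (2*π*k/T) τ σ x‖^2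
          ≤ ∑ _k ∈ Finset.Icc 1 (T/2), Qb :=
            Finset.sum_le_sum fun k _ => hcore (2*π*k/T)
        _ = ((Finset.Icc 1 (T/2)).card : ℝ) * Qb := by
            rw [Finset.sum_const, nsmul_eq_mul]
    have hc1nn : (0:ℝ) ≤ ((Finset.Icc 1 (T/2)).card : ℝ) := Nat.cast_nonneg _
    calc (4/(T:ℝ)^2) * (((Finset.Icc 1 (T/2)).card : ℝ) *
          ∑ k ∈ Finset.Icc 1 (T/2), ∫ x, ‖p T (2*π*k/T) τ σ x‖^2)
        ≤ (4/(T:ℝ)^2) * (((Finset.Icc 1 (T/2)).card : ℝ) *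
          (((Finset.Icc 1 (T/2)).card : ℝ) * Qb)) :=
          mul_le_mul_of_nonneg_left (mul_le_mul_of_nonneg_left hsum hc1nn) (by positivity)
      _ ≤ (4/(T:ℝ)^2) * ((T:ℝ)/2 * ((T:ℝ)/2 * Qb)) := by
          refine mul_le_mul_of_nonneg_left ?_ (by positivity)
          exact mul_le_mul hcard1 (mul_le_mul hcard1 le_rfl hQb_nn (by positivity))
            (mul_nonneg hc1nn hQb_nn) (by positivity)
      _ = Qb := by field_simp; ring
  -- integrability of S2 and ‖S1‖²
  have hS2int : Integrable (S2 T τ σ) := by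
    have h : S2 T τ σ = fun x => (2/(T:ℂ)) * ∑ k ∈ Finset.Icc 2 (T/2),
        p T (2*π*k/T) τ σ x * conj (p T (2*π*((k:ℝ)-1)/T) τ σ x) := funext (hS2 T τ σ)
    rw [h]
    exact (integrable_finset_sum _ fun k _ =>
      integrable_mul2C (hp2 _) (memLp_conj (hp2 _))).const_mul _
  have hS1sqint : Integrable (fun x => ‖S1 T τ σ x‖^2) := by
    have hS1mem : MemLp (S1 T τ σ) 2 := by
      have h : S1 T τ σ = fun x => (1/(T:ℂ)) * ∑ k ∈ Finset.Icc 1 (T/2),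
          (p T (2*π*k/T) τ σ x + conj (p T (2*π*k/T) τ σ x)) := funext (hS1 T τ σ)
      rw [h]
      exact MemLp.const_mul (memLp_finset_sum (f := fun (k : ℕ) x =>
          p T (2*π*k/T) τ σ x + conj (p T (2*π*k/T) τ σ x)) _ fun k _ =>
        (hp2 (2*π*k/T)).add (memLp_conj (hp2 (2*π*k/T)))) _
    exact hS1mem.norm.integrable_sq
  -- final assembly
  have hfinal : ∫ x, ‖S2 T τ σ x - S1 T τ σ x * conj (S1 T τ σ x)‖ ≤ Qb + Qb := by
    have hBint : Integrable (fun x => ‖S2 T τ σ x‖ + ‖S1 T τ σ x‖^2) :=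
      hS2int.norm.add hS1sqint
    have hptw : ∀ x, ‖S2 T τ σ x - S1 T τ σ x * conj (S1 T τ σ x)‖
        ≤ ‖S2 T τ σ x‖ + ‖S1 T τ σ x‖^2 := by
      intro x
      calc ‖S2 T τ σ x - S1 T τ σ x * conj (S1 T τ σ x)‖
          ≤ ‖S2 T τ σ x‖ + ‖S1 T τ σ x * conj (S1 T τ σ x)‖ := norm_sub_le _ _
        _ = ‖S2 T τ σ x‖ + ‖S1 T τ σ x‖^2 := by
            rw [norm_mul, RCLike.norm_conj]; ring
    calc ∫ x, ‖S2 T τ σ x - S1 T τ σ x * conj (S1 T τ σ x)‖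
        ≤ ∫ x, (‖S2 T τ σ x‖ + ‖S1 T τ σ x‖^2) :=
          integral_mono_of_nonneg (Filter.Eventually.of_forall fun x => norm_nonneg _) hBint
            (Filter.Eventually.of_forall hptw)
      _ = (∫ x, ‖S2 T τ σ x‖) + ∫ x, ‖S1 T τ σ x‖^2 := integral_add hS2int.norm hS1sqint
      _ ≤ Qb + Qb := add_le_add hS2b hS1b
  have hsq : Real.sqrt T ≤ (T:ℝ) := by
    nlinarith [Real.sq_sqrt hTpos.le, Real.sqrt_nonneg (T:ℝ)]
  calc 2 * π * Real.sqrt T * ∫ x, ‖S2 T τ σ x - S1 T τ σ x * conj (S1 T τ σ x)‖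
      ≤ 2 * π * Real.sqrt T * (Qb + Qb) :=
        mul_le_mul_of_nonneg_left hfinal (by positivity)
    _ ≤ Q τ σ := by
        rw [hQbdef]
        have h1 : 2 * π * Real.sqrt T * (Q τ σ/(4*π^2*T) + Q τ σ/(4*π^2*T))
            = Real.sqrt T * Q τ σ / (π * T) := by
          field_simp
          ring
        rw [h1, div_le_iff₀ (by positivity)]
        nlinarith [mul_le_mul_of_nonneg_right hsq hQnn,
          mul_nonneg (mul_nonneg hTpos.le hQnn)
            (show (0:ℝ) ≤ π - 1 by linarith [Real.pi_gt_three])]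

end
end
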